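/- arXiv:2511.20535 — 9 statements merged into one kernel-verified Lean document; each statement's English description precedes it below -/
import Mathlib

section
/- Assume |c| < 1. Then Z ⊆ K⁻ and K⁻ ⊆ R ∪ Z. -/
variable {p : ℕ}

/-- The unique `f`-preimage map `g(u,v) = (v, (u - c)/v)`. -/
noncomputable def g [Fact p.Prime] (c : ℚ_[p]) (z : ℚ_[p] × ℚ_[p]) : ℚ_[p] × ℚ_[p] :=
  (z.2, (z.1 - c) / z.2)

/-- The set `Q` of points whose backward iterates are all defined. -/
def QSet [Fact p.Prime] (c : ℚ_[p]) : Set (ℚ_[p] × ℚ_[p]) :=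
  {z | ∀ n : ℕ, ((g c)^[n] z).2 ≠ 0}

/-- `‖(x,y)‖ = max(|x|,|y|)`. -/
noncomputable def pnorm [Fact p.Prime] (z : ℚ_[p] × ℚ_[p]) : ℝ := max ‖z.1‖ ‖z.2‖

/-- The backward filled Julia set `K⁻`. -/
def KMinus [Fact p.Prime] (c : ℚ_[p]) : Set (ℚ_[p] × ℚ_[p]) :=
  {z | z ∈ QSet c ∧ ∃ M : ℝ, ∀ n : ℕ, pnorm ((g c)^[n] z) ≤ M}

lemma iter_fst [Fact p.Prime] (c : ℚ_[p]) (z : ℚ_[p] × ℚ_[p]) (n : ℕ) :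
    ((g c)^[n+1] z).1 = ((g c)^[n] z).2 := by
  rw [Function.iterate_succ_apply']
  rfl

lemma iter_rec [Fact p.Prime] (c : ℚ_[p]) (z : ℚ_[p] × ℚ_[p])
    (hz : ∀ n, ((g c)^[n] z).2 ≠ 0) (n : ℕ) :
    ((g c)^[n+1] z).1 * ((g c)^[n+2] z).1 = ((g c)^[n] z).1 - c := by
  have h1 : ((g c)^[n+1] z).1 = ((g c)^[n] z).2 := iter_fst c z n
  have h2 : ((g c)^[n+2] z).1 = (((g c)^[n] z).1 - c) / ((g c)^[n] z).2 := by
    show ((g c)^[(n+1)+1] z).1 = _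
    rw [iter_fst c z (n+1), Function.iterate_succ_apply']
    rfl
  rw [h1, h2, mul_comm, div_mul_cancel₀ _ (hz n)]

/-- The combinatorial core, stated abstractly over ℝ. -/
lemma core {P γ : ℝ} (hP : 2 ≤ P) (hγ0 : 0 ≤ γ) (hγ1 : γ < 1)
    (a : ℕ → ℝ) (ha0 : ∀ n, 0 ≤ a n)
    (hne : ∀ n, a n ≠ γ → a (n+1) * a (n+2) = max (a n) γ)
    (hle : ∀ n, a (n+1) * a (n+2) ≤ max (a n) γ)
    (hge : ∀ n, a n ≤ max (a (n+1) * a (n+2)) γ)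
    (disc1 : ∀ n, a n < 1 → P * a n ≤ 1)
    (disc2 : ∀ n, 1 < a n → P ≤ a n)
    (hbdd : ∃ M, ∀ n, a n ≤ M) :
    (a 0 = 1 ∧ a 1 = 1) ∨ (a 0 = γ ∧ a 1 = γ) := by
  have hP1 : (1:ℝ) < P := by linarith
  have hP0 : (0:ℝ) < P := by linarith
  obtain ⟨M, hM⟩ := hbdd
  have hpow : ∀ x M' : ℝ, 0 < x → ∃ k : ℕ, M' < P ^ k * x := by
    intro x M' hx
    obtain ⟨k, hk⟩ := pow_unbounded_of_one_lt (M' / x) hP1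
    exact ⟨k, by rwa [div_lt_iff₀ hx] at hk⟩
  -- one growth step
  have step : ∀ m, 1 < a (m+1) → a m < a (m+1) →
      ∃ m', (1 < a (m'+1) ∧ a m' < a (m'+1)) ∧ P * a (m+1) ≤ a (m'+1) := by
    intro m h1 h2
    have hγm : γ < a (m+1) := lt_trans hγ1 h1
    have hA2 : a (m+1) * a (m+2) < a (m+1) :=
      lt_of_le_of_lt (hle m) (max_lt h2 hγm)
    have h3 : a (m+2) < 1 := by
      by_contra hc'
      push_neg at hc'
      have := le_mul_of_one_le_right (le_of_lt (lt_trans one_pos h1)) hc'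
      linarith
    have d1 := disc1 (m+2) h3
    have e2 : a (m+2) * a (m+3) = a (m+1) := by
      have := hne (m+1) (ne_of_gt hγm)
      rw [max_eq_left hγm.le] at this
      exact this
    have h4 : P * a (m+1) ≤ a (m+3) := by
      have hmm := mul_le_mul_of_nonneg_right d1 (ha0 (m+3))
      rw [← e2]
      nlinarith [hmm]
    have h5 : 1 < a (m+3) := by nlinarith [h4, h1, hP]
    refine ⟨m+2, ⟨h5, lt_trans h3 h5⟩, h4⟩
  -- no increasing pair above 1
  have hU : ∀ n, ¬ (1 < a (n+1) ∧ a n < a (n+1)) := by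
    rintro n ⟨h1, h2⟩
    have grow : ∀ k, ∃ m, (1 < a (m+1) ∧ a m < a (m+1)) ∧ P ^ k * a (n+1) ≤ a (m+1) := by
      intro k
      induction k with
      | zero => exact ⟨n, ⟨h1, h2⟩, by simp⟩
      | succ k ih =>
        obtain ⟨m, hm, hgm⟩ := ih
        obtain ⟨m', hm', hstep⟩ := step m hm.1 hm.2
        refine ⟨m', hm', ?_⟩
        calc P ^ (k+1) * a (n+1) = P * (P ^ k * a (n+1)) := by ring
          _ ≤ P * a (m+1) := mul_le_mul_of_nonneg_left hgm hP0.le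
          _ ≤ a (m'+1) := hstep
    obtain ⟨k, hk⟩ := hpow (a (n+1)) M (lt_trans one_pos h1)
    obtain ⟨m, _, hgm⟩ := grow k
    linarith [hM (m+1)]
  -- all terms (from index 1) are ≤ 1
  have hA1 : ∀ n, a (n+1) ≤ 1 := by
    by_contra hcon
    push_neg at hcon
    obtain ⟨m, hm1⟩ := hcon
    have sub1 : ∀ k, m ≤ k → 1 < a (k+1) := by
      intro k hk
      induction k, hk using Nat.le_induction with
      | base => exact hm1
      | succ k hk ih =>
        by_contra h
        push_neg at h
        have hγk : γ < a (k+1) := lt_trans hγ1 ih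
        have e2 : a (k+1+1) * a (k+1+2) = a (k+1) := by
          have := hne (k+1) (ne_of_gt hγk)
          rw [max_eq_left hγk.le] at this
          exact this
        have h7 : a (k+1) ≤ a (k+1+2) := by
          have := mul_le_of_le_one_left (ha0 (k+1+2)) h
          linarith
        refine hU (k+1+1) ⟨?_, ?_⟩
        · show 1 < a (k+1+2); linarith
        · show a (k+1+1) < a (k+1+2); linarith
    have sub2 : ∀ k, P ^ k * a (m+1+2*k) ≤ a (m+1) := by
      intro k
      induction k with
      | zero => simp
      | succ k ih =>
        have h1 : 1 < a (m+1+2*k) := by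
          have h' := sub1 (m + 2*k) (Nat.le_add_right m (2*k))
          have e : m + 2*k + 1 = m + 1 + 2*k := by omega
          rwa [e] at h'
        have h2 : 1 < a (m+1+2*k+1) := sub1 (m+1+2*k) (by omega)
        have e2 : a (m+1+2*k+1) * a (m+1+2*k+2) = a (m+1+2*k) := by
          have := hne (m+1+2*k) (ne_of_gt (lt_trans hγ1 h1))
          rw [max_eq_left (lt_trans hγ1 h1).le] at this
          exact this
        have hd2 := disc2 (m+1+2*k+1) h2
        have hkey : P * a (m+1+2*k+2) ≤ a (m+1+2*k) := by
          have hmm := mul_le_mul_of_nonneg_right hd2 (ha0 (m+1+2*k+2))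
          linarith [e2, hmm]
        have e : m+1+2*(k+1) = m+1+2*k+2 := by omega
        rw [e]
        calc P ^ (k+1) * a (m+1+2*k+2) = P ^ k * (P * a (m+1+2*k+2)) := by ring
          _ ≤ P ^ k * a (m+1+2*k) := by
              exact mul_le_mul_of_nonneg_left hkey (pow_nonneg hP0.le k)
          _ ≤ a (m+1) := ih
    obtain ⟨k, hk⟩ := hpow 1 (a (m+1)) one_pos
    have h1 : 1 < a (m+1+2*k) := by
      have h' := sub1 (m + 2*k) (Nat.le_add_right m (2*k))
      have e : m + 2*k + 1 = m + 1 + 2*k := by omega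
      rwa [e] at h'
    have h2 := sub2 k
    have h3 := mul_lt_mul_of_pos_left h1 (pow_pos hP0 k)
    nlinarith [h2, h3, hk]
  have hA : ∀ n, a n ≤ 1 := by
    intro n
    cases n with
    | zero =>
      have h12 : a 1 * a 2 ≤ 1 := by nlinarith [hA1 0, hA1 1, ha0 1, ha0 2]
      have := hge 0
      have hmx : max (a 1 * a 2) γ ≤ 1 := max_le h12 hγ1.le
      linarith
    | succ n => exact hA1 n
  -- G1 : above γ everything is 1
  have G1 : ∀ m, γ < a m → ∀ k, m ≤ k → a k = 1 := by
    intro m hm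
    have hγa : ∀ k, m ≤ k → γ < a k := by
      intro k hk
      induction k, hk using Nat.le_induction with
      | base => exact hm
      | succ k hk ih =>
        have hrec := hne k (ne_of_gt ih)
        rw [max_eq_left ih.le] at hrec
        have := mul_le_of_le_one_right (ha0 (k+1)) (hA (k+2))
        linarith
    have hprod : ∀ k, m ≤ k → a (k+1) * a (k+2) = a k := by
      intro k hk
      have := hne k (ne_of_gt (hγa k hk))
      rw [max_eq_left (hγa k hk).le] at this
      exact this
    have hK : ∃ K, m ≤ K ∧ a K = 1 := by
      by_contra h
      push_neg at h
      have hlt : ∀ K, m ≤ K → a K < 1 := fun K hK => lt_of_le_of_ne (hA K) (h K hK)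
      have hstep : ∀ k, m ≤ k → P * a k ≤ a (k+2) := by
        intro k hk
        have d := disc1 (k+1) (hlt (k+1) (by omega))
        have hmm := mul_le_mul_of_nonneg_right d (ha0 (k+2))
        rw [← hprod k hk]
        nlinarith [hmm]
      have hgrow : ∀ j, P ^ j * a m ≤ a (m + 2*j) := by
        intro j
        induction j with
        | zero => simp
        | succ j ih =>
          have h2 := hstep (m + 2*j) (by omega)
          have e : m + 2*(j+1) = m + 2*j + 2 := by omega
          rw [e]
          calc P ^ (j+1) * a m = P * (P ^ j * a m) := by ring
            _ ≤ P * a (m + 2*j) := mul_le_mul_of_nonneg_left ih hP0.le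
            _ ≤ a (m + 2*j + 2) := h2
      have ham : 0 < a m := lt_of_le_of_lt hγ0 hm
      obtain ⟨j, hj⟩ := hpow (a m) 1 ham
      have := hgrow j
      have := hlt (m + 2*j) (by omega)
      linarith
    obtain ⟨K, hmK, hK1⟩ := hK
    have hup : ∀ k, K ≤ k → a k = 1 := by
      intro k hk
      induction k, hk using Nat.le_induction with
      | base => exact hK1
      | succ k hk ih =>
        have hp := hprod k (le_trans hmK hk)
        rw [ih] at hp
        have h1le : 1 ≤ a (k+1) := by
          have := mul_le_of_le_one_right (ha0 (k+1)) (hA (k+2))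
          linarith
        exact le_antisymm (hA (k+1)) h1le
    have hdown : ∀ j k, m ≤ k → K ≤ k + j → a k = 1 := by
      intro j
      induction j with
      | zero => intro k hk hK'; exact hup k (by omega)
      | succ j ih =>
        intro k hk hK'
        by_cases h : K ≤ k
        · exact hup k h
        · have h1 := ih (k+1) (by omega) (by omega)
          have h2 := ih (k+2) (by omega) (by omega)
          have hp := hprod k hk
          rw [h1, h2] at hp
          simpa using hp.symm
    exact fun k hk => hdown K k hk (by omega)
  -- G2 : everything is ≥ γ
  have G2 : ∀ n, γ ≤ a n := by
    intro n
    by_contra h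
    push_neg at h
    have hγpos : 0 < γ := lt_of_le_of_lt (ha0 n) h
    have hrec := hne n (ne_of_lt h)
    rw [max_eq_right h.le] at hrec
    have hle1 : a (n+1) ≤ γ := by
      by_contra h1
      push_neg at h1
      have e1 : a (n+1) = 1 := G1 (n+1) h1 (n+1) le_rfl
      have e2 : a (n+2) = 1 := G1 (n+1) h1 (n+2) (by omega)
      rw [e1, e2] at hrec
      nlinarith
    have hle2 : a (n+2) ≤ γ := by
      by_contra h2
      push_neg at h2
      have e2 : a (n+2) = 1 := G1 (n+2) h2 (n+2) le_rfl
      have e3 : a (n+3) = 1 := G1 (n+2) h2 (n+3) (by omega)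
      have ha1 : a (n+1) = γ := by rw [e2] at hrec; linarith
      have := hle (n+1)
      rw [ha1, max_self] at this
      have e2' : a (n+1+1) = 1 := by show a (n+2) = 1; exact e2
      have e3' : a (n+1+2) = 1 := by show a (n+3) = 1; exact e3
      rw [e2', e3'] at this
      nlinarith
    nlinarith [mul_le_mul hle1 hle2 (ha0 (n+2)) hγ0, hrec]
  by_cases h0 : γ < a 0
  · left
    exact ⟨G1 0 h0 0 le_rfl, G1 0 h0 1 (by omega)⟩
  · right
    push_neg at h0
    have h0' : a 0 = γ := le_antisymm h0 (G2 0)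
    refine ⟨h0', ?_⟩
    rcases lt_or_eq_of_le (G2 1) with h1 | h1
    · exfalso
      have ha1 : a 1 = 1 := G1 1 h1 1 le_rfl
      have ha2 : a 2 = 1 := G1 1 h1 2 (by omega)
      have := hle 0
      rw [h0', max_self] at this
      have ha1' : a (0+1) = 1 := ha1
      have ha2' : a (0+2) = 1 := ha2
      rw [ha1', ha2'] at this
      nlinarith
    · exact h1.symm

/-- If `|c| < 1` then `Z ⊆ K⁻ ⊆ R ∪ Z`. -/
theorem stmt0 [Fact p.Prime] (hodd : Odd p) (c : ℚ_[p]) (hc : ‖c‖ < 1) :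
    {z ∈ QSet c | ‖z.1‖ = 1 ∧ ‖z.2‖ = 1} ⊆ KMinus c ∧
      KMinus c ⊆
        {z ∈ QSet c | ‖z.1‖ = ‖c‖ ∧ ‖z.2‖ = ‖c‖} ∪
          {z ∈ QSet c | ‖z.1‖ = 1 ∧ ‖z.2‖ = 1} := by
  constructor
  · rintro z ⟨hQ, h1, h2⟩
    have hQ' : ∀ n, ((g c)^[n] z).2 ≠ 0 := hQ
    have key : ∀ n, ‖((g c)^[n] z).1‖ = 1 ∧ ‖((g c)^[n+1] z).1‖ = 1 := by
      intro n
      induction n with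
      | zero => exact ⟨h1, by rw [iter_fst]; exact h2⟩
      | succ n ih =>
        refine ⟨ih.2, ?_⟩
        have hr := iter_rec c z hQ' n
        have hnc : ‖((g c)^[n] z).1 - c‖ = 1 := by
          rw [sub_eq_add_neg, Padic.add_eq_max_of_ne (by rw [norm_neg, ih.1]; exact (ne_of_gt hc)), norm_neg, ih.1]
          exact max_eq_left hc.le
        have := congrArg (fun w => ‖w‖) hr
        simp only [norm_mul] at this
        rw [ih.2, one_mul] at this
        rw [this, hnc]
    refine ⟨hQ, 1, fun n => ?_⟩
    have h1' := (key n).1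
    have h2' : ‖((g c)^[n] z).2‖ = 1 := by rw [← iter_fst]; exact (key n).2
    simp [pnorm, h1', h2']
  · rintro z ⟨hQ, M, hM⟩
    have hQ' : ∀ n, ((g c)^[n] z).2 ≠ 0 := hQ
    set a : ℕ → ℝ := fun n => ‖((g c)^[n] z).1‖ with ha
    have hPfact : p.Prime := Fact.out
    have hp2 : (2:ℝ) ≤ (p:ℝ) := by exact_mod_cast hPfact.two_le
    have hmul : ∀ n, a (n+1) * a (n+2) = ‖((g c)^[n] z).1 - c‖ := by
      intro n
      rw [ha]
      simp only
      rw [← norm_mul, iter_rec c z hQ' n]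
    have hne : ∀ n, a n ≠ ‖c‖ → a (n+1) * a (n+2) = max (a n) ‖c‖ := by
      intro n hn
      rw [hmul n, sub_eq_add_neg,
        Padic.add_eq_max_of_ne (by rw [norm_neg]; exact hn), norm_neg]
    have hle : ∀ n, a (n+1) * a (n+2) ≤ max (a n) ‖c‖ := by
      intro n
      rw [hmul n, sub_eq_add_neg]
      calc ‖((g c)^[n] z).1 + -c‖ ≤ max ‖((g c)^[n] z).1‖ ‖-c‖ := Padic.nonarchimedean _ _
        _ = max (a n) ‖c‖ := by rw [norm_neg]
    have hge : ∀ n, a n ≤ max (a (n+1) * a (n+2)) ‖c‖ := by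
      intro n
      rw [hmul n]
      calc a n = ‖(((g c)^[n] z).1 - c) + c‖ := by rw [sub_add_cancel]
        _ ≤ max ‖((g c)^[n] z).1 - c‖ ‖c‖ := Padic.nonarchimedean _ _
    have hp0 : (0:ℝ) < (p:ℝ) := by positivity
    have disc1 : ∀ n, a n < 1 → (p:ℝ) * a n ≤ 1 := by
      intro n hn
      have h1 : ‖((g c)^[n] z).1‖ ≤ (p:ℝ) ^ (-1:ℤ) := by
        refine (Padic.norm_le_pow_iff_norm_lt_pow_add_one _ (-1)).mpr ?_
        rw [neg_add_cancel, zpow_zero]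
        exact hn
      have h2 : (p:ℝ) * ‖((g c)^[n] z).1‖ ≤ (p:ℝ) * (p:ℝ) ^ (-1:ℤ) :=
        mul_le_mul_of_nonneg_left h1 hp0.le
      rw [zpow_neg_one, mul_inv_cancel₀ (ne_of_gt hp0)] at h2
      exact h2
    have disc2 : ∀ n, 1 < a n → (p:ℝ) ≤ a n := by
      intro n hn
      by_contra h
      push_neg at h
      have h1 : ‖((g c)^[n] z).1‖ ≤ (p:ℝ) ^ (0:ℤ) := by
        refine (Padic.norm_le_pow_iff_norm_lt_pow_add_one _ 0).mpr ?_
        rw [zero_add, zpow_one]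
        exact h
      rw [zpow_zero] at h1
      exact absurd hn (not_lt.mpr h1)
    have hbdd : ∃ M', ∀ n, a n ≤ M' := by
      refine ⟨M, fun n => ?_⟩
      calc a n ≤ pnorm ((g c)^[n] z) := le_max_left _ _
        _ ≤ M := hM n
    have hcore := core hp2 (norm_nonneg c) hc a (fun n => norm_nonneg _) hne hle hge disc1 disc2 hbdd
    have ha0 : a 0 = ‖z.1‖ := rfl
    have ha1 : a 1 = ‖z.2‖ := by
      show ‖((g c)^[0+1] z).1‖ = ‖z.2‖
      rw [iter_fst]
      rfl
    rcases hcore with ⟨h1, h2⟩ | ⟨h1, h2⟩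
    · exact Or.inr ⟨hQ, by rw [← ha0]; exact h1, by rw [← ha1]; exact h2⟩
    · exact Or.inl ⟨hQ, by rw [← ha0]; exact h1, by rw [← ha1]; exact h2⟩
end

section
/- Assume |c| = p. Then J₀ = ∅ and K⁻ ⊆ C. -/
variable {p : ℕ}

/-- The Hénon-like map `f(x,y) = (xy + c, x)`. -/
noncomputable def fmap [Fact p.Prime] (c : ℚ_[p]) (z : ℚ_[p] × ℚ_[p]) : ℚ_[p] × ℚ_[p] :=
  (z.1 * z.2 + c, z.1)

/-- The Fibonacci sequence with `F₀ = F₁ = 1`. -/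
def Fb (n : ℕ) : ℕ := Nat.fib (n + 1)

/-- `J₀ = {(x,y) ∈ Q : |x| < |c|, 1 < |y| < |c|}`. -/
def J0 [Fact p.Prime] (c : ℚ_[p]) : Set (ℚ_[p] × ℚ_[p]) :=
  {z ∈ QSet c | ‖z.1‖ < ‖c‖ ∧ 1 < ‖z.2‖ ∧ ‖z.2‖ < ‖c‖}

def C0 [Fact p.Prime] (c : ℚ_[p]) : Set (ℚ_[p] × ℚ_[p]) :=
  {z ∈ QSet c | ‖z.1‖ < ‖c‖ ∧ (‖z.2‖ = 1 ∨ ‖z.2‖ = ‖c‖)} ∪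
    {z ∈ QSet c | ‖z.1‖ = ‖c‖ ∧ ‖z.2‖ ≤ ‖c‖}

/-- `C_{2n+1}`, for `n ≥ 0`. -/
def Codd [Fact p.Prime] (c : ℚ_[p]) (n : ℕ) : Set (ℚ_[p] × ℚ_[p]) :=
  {z ∈ QSet c | ‖c‖ ^ Fb (2*n) < ‖z.1‖ ∧ ‖z.1‖ ≤ ‖c‖ ^ Fb (2*n+2) ∧
    ‖z.2‖ ^ Fb (2*n+1) = ‖c‖⁻¹ * ‖z.1‖ ^ Fb (2*n)}

/-- `C_{2n+2}`, for `n ≥ 0`. -/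
def Ceven [Fact p.Prime] (c : ℚ_[p]) (n : ℕ) : Set (ℚ_[p] × ℚ_[p]) :=
  {z ∈ QSet c | ‖c‖ ^ Fb (2*n+1) < ‖z.1‖ ∧ ‖z.1‖ ≤ ‖c‖ ^ Fb (2*n+3) ∧
    ‖z.2‖ ^ Fb (2*n+2) = ‖c‖ * ‖z.1‖ ^ Fb (2*n+1)}

def D2 [Fact p.Prime] (c : ℚ_[p]) : Set (ℚ_[p] × ℚ_[p]) :=
  {z ∈ QSet c | ‖c‖ < ‖z.1‖ ∧ ‖z.1‖ < ‖c‖ ^ 2 ∧ ‖z.2‖ = ‖c‖}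

/-- `D_{2n+1}`, for `n ≥ 1`. -/
def Dodd [Fact p.Prime] (c : ℚ_[p]) (n : ℕ) : Set (ℚ_[p] × ℚ_[p]) :=
  {z ∈ QSet c | ‖c‖ ^ Fb (2*n) < ‖z.1‖ ∧ ‖z.1‖ < ‖c‖ ^ Fb (2*n+1) ∧
    ‖z.2‖ ^ Fb (2*n-1) = ‖c‖⁻¹ * ‖z.1‖ ^ Fb (2*n-2)}

/-- `D_{2n+2}`, for `n ≥ 1`. -/
def Deven [Fact p.Prime] (c : ℚ_[p]) (n : ℕ) : Set (ℚ_[p] × ℚ_[p]) :=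
  {z ∈ QSet c | ‖c‖ ^ Fb (2*n+1) < ‖z.1‖ ∧ ‖z.1‖ < ‖c‖ ^ Fb (2*n+2) ∧
    ‖z.2‖ ^ Fb (2*n) = ‖c‖ * ‖z.1‖ ^ Fb (2*n-1)}

/-- `C = ⋃_{i ≥ 0} (C_i ∪ D_{i+2})`. -/
def CSet [Fact p.Prime] (c : ℚ_[p]) : Set (ℚ_[p] × ℚ_[p]) :=
  C0 c ∪ (⋃ n : ℕ, Codd c n) ∪ (⋃ n : ℕ, Ceven c n) ∪
    D2 c ∪ (⋃ n : ℕ, Dodd c (n+1)) ∪ (⋃ n : ℕ, Deven c (n+1))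
def Fz (n : ℕ) : ℤ := (Fb n : ℤ)

lemma Fz_add_two (n : ℕ) : Fz (n+2) = Fz n + Fz (n+1) := by
  simp only [Fz, Fb, show n+2+1 = (n+1)+2 from by ring, Nat.fib_add_two]
  push_cast; ring

lemma Fz_pos (n : ℕ) : 0 < Fz n := by
  simp only [Fz, Fb]
  exact_mod_cast Nat.fib_pos.2 (Nat.succ_pos n)

lemma Fz_zero : Fz 0 = 1 := rfl
lemma Fz_one : Fz 1 = 1 := rfl
lemma Fz_two : Fz 2 = 2 := by decide
lemma Fz_three : Fz 3 = 3 := by decide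

lemma cassini : ∀ n : ℕ, Fz n * Fz (n+2) - Fz (n+1)^2 = (-1)^n := by
  intro n
  induction n with
  | zero => decide
  | succ n ih =>
    have r1 := Fz_add_two n
    have r2 : Fz (n+3) = Fz (n+1) + Fz (n+2) := Fz_add_two (n+1)
    have key : Fz (n+1) * Fz (n+3) - Fz (n+2)^2 = -(Fz n * Fz (n+2) - Fz (n+1)^2) := by
      rw [r2, r1]; ring
    show Fz (n+1) * Fz (n+3) - Fz (n+2)^2 = (-1)^(n+1)
    rw [key, ih]; ring

lemma cassE (m : ℕ) : Fz (2*m) * Fz (2*m+2) = Fz (2*m+1)^2 + 1 := by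
  have h := cassini (2*m)
  have h2 : ((-1:ℤ))^(2*m) = 1 := by rw [pow_mul]; norm_num
  rw [h2] at h; linarith

lemma cassO (m : ℕ) : Fz (2*m+1) * Fz (2*m+3) = Fz (2*m+2)^2 - 1 := by
  have h := cassini (2*m+1)
  have h2 : ((-1:ℤ))^(2*m+1) = -1 := by rw [pow_succ, pow_mul]; norm_num
  rw [h2] at h; linarith

lemma catO (m : ℕ) : Fz (2*m+1) * Fz (2*m+4) = Fz (2*m+2) * Fz (2*m+3) - 1 := by
  have h1 := cassO m
  have r : Fz (2*m+4) = Fz (2*m+2) + Fz (2*m+3) := Fz_add_two (2*m+2)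
  have r' : Fz (2*m+3) = Fz (2*m+1) + Fz (2*m+2) := Fz_add_two (2*m+1)
  rw [r]
  linear_combination h1 - Fz (2*m+2) * r'

lemma catE (m : ℕ) : Fz (2*m+2) * Fz (2*m+5) = Fz (2*m+3) * Fz (2*m+4) + 1 := by
  have h1 : Fz (2*m+2) * Fz (2*m+4) = Fz (2*m+3)^2 + 1 := cassE (m+1)
  have r : Fz (2*m+5) = Fz (2*m+3) + Fz (2*m+4) := Fz_add_two (2*m+3)
  have r'' : Fz (2*m+4) = Fz (2*m+2) + Fz (2*m+3) := Fz_add_two (2*m+2)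
  rw [r]
  linear_combination h1 - Fz (2*m+3) * r''

/-- The integer staircase predicate. -/
def InS (a b : ℤ) : Prop :=
  ∃ m : ℕ, (Fz (2*m) < a ∧ a < Fz (2*m+3) ∧ b * Fz (2*m+1) = a * Fz (2*m) - 1) ∨
           (Fz (2*m+1) < a ∧ a < Fz (2*m+4) ∧ b * Fz (2*m+2) = a * Fz (2*m+1) + 1)

lemma InS.pull {a b : ℤ} (h : InS a b) (ha : 2 ≤ a) (hb : 1 ≤ b) : InS (a + b) a := by
  obtain ⟨m, h | h⟩ := h
  · obtain ⟨h1, h2, h3⟩ := h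
    have r2 : Fz (2*m+2) = Fz (2*m) + Fz (2*m+1) := Fz_add_two (2*m)
    have E := cassE m
    have C := catO m
    have p0 := Fz_pos (2*m); have p1 := Fz_pos (2*m+1); have p2 := Fz_pos (2*m+2)
    have p3 := Fz_pos (2*m+3); have p4 := Fz_pos (2*m+4)
    have key : (a + b) * Fz (2*m+1) = a * Fz (2*m+2) - 1 := by
      linear_combination h3 - a * r2
    refine ⟨m, Or.inr ⟨?_, ?_, ?_⟩⟩
    · nlinarith [key, E, mul_le_mul_of_nonneg_right (show Fz (2*m) + 1 ≤ a from by omega) p2.le]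
    · nlinarith [key, C, mul_le_mul_of_nonneg_right (show a ≤ Fz (2*m+3) - 1 from by omega) p2.le]
    · linarith [key]
  · obtain ⟨h1, h2, h3⟩ := h
    have r3 : Fz (2*m+3) = Fz (2*m+1) + Fz (2*m+2) := Fz_add_two (2*m+1)
    have E := cassO m
    have C := catE m
    have p1 := Fz_pos (2*m+1); have p2 := Fz_pos (2*m+2)
    have p3 := Fz_pos (2*m+3); have p5 := Fz_pos (2*m+5)
    have key : (a + b) * Fz (2*m+2) = a * Fz (2*m+3) + 1 := by
      linear_combination h3 - a * r3
    refine ⟨m+1, Or.inl ⟨?_, ?_, ?_⟩⟩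
    · show Fz (2*m+2) < a + b
      nlinarith [key, E, mul_le_mul_of_nonneg_right (show Fz (2*m+1) + 1 ≤ a from by omega) p3.le]
    · show a + b < Fz (2*m+5)
      nlinarith [key, C, mul_le_mul_of_nonneg_right (show a ≤ Fz (2*m+4) - 1 from by omega) p3.le]
    · show a * Fz (2*m+3) = (a + b) * Fz (2*m+2) - 1
      linarith [key]

/-- The abstract transition property of the sequence of `y`-log-norms. -/
def HSeq (b : ℕ → ℤ) : Prop := ∀ n : ℕ,
  (b n ≠ 1 → b (n+2) = max (b n) 1 - b (n+1)) ∧ (b n = 1 → b (n+2) ≤ 1 - b (n+1))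

lemma HSeq.shift {b : ℕ → ℤ} (H : HSeq b) (k : ℕ) : HSeq (fun n => b (k + n)) := by
  intro n
  have h := H (k + n)
  constructor
  · intro h1
    simpa only [show k+(n+2) = k+n+2 from by ring, show k+(n+1) = k+n+1 from by ring]
      using h.1 h1
  · intro h1
    simpa only [show k+(n+2) = k+n+2 from by ring, show k+(n+1) = k+n+1 from by ring]
      using h.2 h1

lemma escape {b : ℕ → ℤ} (H : HSeq b) {B : ℤ} (hB : ∀ n, b n ≤ B)
    (h0 : 2 ≤ b 0) (h1 : b 1 ≤ 0) : False := by
  have inv : ∀ k, 2 ≤ b (2*k) ∧ b (2*k+1) ≤ 0 := by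
    intro k
    induction k with
    | zero => exact ⟨h0, h1⟩
    | succ k ih =>
      have e2 := (H (2*k)).1 (by omega)
      rw [max_eq_left (by omega)] at e2
      have e3 := (H (2*k+1)).1 (by omega)
      rw [max_eq_right (by omega)] at e3
      rw [show 2*k+1+2 = 2*k+3 from rfl, show 2*k+1+1 = 2*k+2 from rfl] at e3
      constructor
      · rw [show 2*(k+1) = 2*k+2 from by ring]; omega
      · rw [show 2*(k+1)+1 = 2*k+3 from by ring]; omega
  have grow : ∀ k : ℕ, (k:ℤ) + 2 ≤ b (2*k+2) := by
    intro k
    induction k with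
    | zero =>
      have e2 := (H 0).1 (by omega)
      rw [max_eq_left (by omega)] at e2
      rw [show (0:ℕ)+2 = 2 from rfl, show (0:ℕ)+1 = 1 from rfl] at e2
      show (0:ℤ) + 2 ≤ b (2*0+2)
      rw [show 2*0+2 = 2 from rfl]
      omega
    | succ k ih =>
      have i0 := inv k
      have i1 := inv (k+1)
      rw [show 2*(k+1) = 2*k+2 from by ring, show 2*k+2+1 = 2*k+3 from rfl] at i1
      have e3 := (H (2*k+1)).1 (by omega)
      rw [max_eq_right (by omega)] at e3
      rw [show 2*k+1+2 = 2*k+3 from rfl, show 2*k+1+1 = 2*k+2 from rfl] at e3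
      have e4 := (H (2*k+2)).1 (by omega)
      rw [max_eq_left (by omega)] at e4
      rw [show 2*k+2+2 = 2*k+4 from rfl, show 2*k+2+1 = 2*k+3 from rfl] at e4
      rw [show 2*(k+1)+2 = 2*k+4 from by ring]
      push_cast
      omega
  have hk := grow (B.toNat + 1)
  have := hB (2*(B.toNat+1)+2)
  omega

lemma stair_aux {B : ℤ} : ∀ m : ℕ, ∀ b : ℕ → ℤ, HSeq b → (∀ n, b n ≤ B) →
    2 ≤ b 0 → b 0 ≤ (m:ℤ) → 1 ≤ b 1 → InS (b 0) (b 1) := by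
  intro m
  induction m using Nat.strong_induction_on with
  | _ m ih =>
    intro b H hB h0 hm h1
    have e2 := (H 0).1 (by omega)
    rw [max_eq_left (by omega)] at e2
    rw [show (0:ℕ)+2 = 2 from rfl, show (0:ℕ)+1 = 1 from rfl] at e2
    by_cases hba : b 0 ≤ b 1
    · exfalso
      refine escape (H.shift 1) (fun n => hB (1+n)) ?_ ?_
      · show 2 ≤ b 1; omega
      · show b 2 ≤ 0; omega
    · by_cases hb1 : b 1 = 1
      · by_cases h3 : 3 ≤ b 0
        · exfalso
          have e3 := (H 1).2 hb1
          rw [show (1:ℕ)+2 = 3 from rfl, show (1:ℕ)+1 = 2 from rfl] at e3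
          refine escape (H.shift 2) (fun n => hB (2+n)) ?_ ?_
          · show 2 ≤ b 2; omega
          · show b 3 ≤ 0; omega
        · have hb0 : b 0 = 2 := by omega
          refine ⟨0, Or.inl ⟨?_, ?_, ?_⟩⟩
          · rw [Fz_zero]; omega
          · rw [show (2*0+3 : ℕ) = 3 from rfl, Fz_three]; omega
          · rw [show (2*0+1 : ℕ) = 1 from rfl, show (2*0 : ℕ) = 0 from rfl, Fz_one, Fz_zero]
            omega
      · have h2 : 1 ≤ b 2 := by omega
        have hrec : InS (b 1) (b 2) := by
          have := ih (b 1).toNat (by omega) (fun n => b (1+n)) (H.shift 1)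
            (fun n => hB (1+n)) (by show 2 ≤ b 1; omega)
            (by show b 1 ≤ ((b 1).toNat : ℤ); omega)
            (by show 1 ≤ b 2; omega)
          simpa using this
        have hp := hrec.pull (by omega) h2
        have hsum : b 1 + b 2 = b 0 := by omega
        rwa [hsum] at hp

section zpowaux

lemma hp_one_lt [hp : Fact p.Prime] : (1:ℝ) < p := by exact_mod_cast hp.out.one_lt

lemma hp_pos [hp : Fact p.Prime] : (0:ℝ) < p := lt_trans one_pos hp_one_lt

lemma npow_lt_zpow [Fact p.Prime] {k : ℕ} {α : ℤ} (h : (k:ℤ) < α) :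
    (p:ℝ)^k < (p:ℝ)^α := by
  rw [← zpow_natCast]
  exact (zpow_lt_zpow_iff_right₀ hp_one_lt).2 h

lemma zpow_le_npow [Fact p.Prime] {k : ℕ} {α : ℤ} (h : α ≤ (k:ℤ)) :
    (p:ℝ)^α ≤ (p:ℝ)^k := by
  rw [← zpow_natCast]
  exact (zpow_le_zpow_iff_right₀ hp_one_lt).2 h

lemma zpow_lt_npow [Fact p.Prime] {k : ℕ} {α : ℤ} (h : α < (k:ℤ)) :
    (p:ℝ)^α < (p:ℝ)^k := by
  rw [← zpow_natCast]
  exact (zpow_lt_zpow_iff_right₀ hp_one_lt).2 h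

lemma eqpow [Fact p.Prime] {β α ε : ℤ} {j i : ℕ} (h : β * (j:ℤ) = α * (i:ℤ) + ε) :
    ((p:ℝ)^β)^j = (p:ℝ)^ε * ((p:ℝ)^α)^i := by
  rw [← zpow_natCast ((p:ℝ)^β), ← zpow_natCast ((p:ℝ)^α), ← zpow_mul, ← zpow_mul,
    ← zpow_add₀ (ne_of_gt hp_pos)]
  congr 1
  linarith

end zpowaux

/-- If `|c| = p` then `J₀ = ∅` and `K⁻ ⊆ C`. -/
theorem stmt2 [Fact p.Prime] (hodd : Odd p) (c : ℚ_[p]) (hc : ‖c‖ = p) :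
    J0 c = ∅ ∧ KMinus c ⊆ CSet c := by
  classical
  have hp1 : (1:ℝ) < p := hp_one_lt
  have hppos : (0:ℝ) < p := hp_pos
  constructor
  · -- J₀ = ∅
    rw [Set.eq_empty_iff_forall_notMem]
    rintro z ⟨hQ, _hx, hy1, hy2⟩
    have hy0 : z.2 ≠ 0 := by simpa using hQ 0
    rw [Padic.norm_eq_zpow_neg_valuation hy0] at hy1 hy2
    rw [hc] at hy2
    have h1 : (0:ℤ) < -z.2.valuation := by
      have h : (p:ℝ)^(0:ℤ) < (p:ℝ)^(-z.2.valuation) := by rw [zpow_zero]; exact hy1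
      exact (zpow_lt_zpow_iff_right₀ hp1).1 h
    have h2 : -z.2.valuation < (1:ℤ) := by
      have h : (p:ℝ)^(-z.2.valuation) < (p:ℝ)^(1:ℤ) := by rw [zpow_one]; exact hy2
      exact (zpow_lt_zpow_iff_right₀ hp1).1 h
    omega
  · -- K⁻ ⊆ C
    rintro z ⟨hQ, M, hM⟩
    simp only [CSet, C0, Codd, Ceven, D2, Dodd, Deven, Set.mem_union, Set.mem_iUnion,
      Set.mem_setOf_eq, Set.mem_sep_iff]
    set Z : ℕ → ℚ_[p] × ℚ_[p] := fun n => (g c)^[n] z with hZdef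
    have hZ0 : Z 0 = z := rfl
    have hy : ∀ n, (Z n).2 ≠ 0 := fun n => hQ n
    set b : ℕ → ℤ := fun n => -((Z n).2.valuation) with hbdef
    have hnorm : ∀ n, ‖(Z n).2‖ = (p:ℝ)^(b n) := fun n => Padic.norm_eq_zpow_neg_valuation (hy n)
    have hZs : ∀ n, Z (n+1) = g c (Z n) := fun n => Function.iterate_succ_apply' (g c) n z
    have hx1 : ∀ n, (Z (n+1)).1 = (Z n).2 := fun n => by rw [hZs n]; rfl
    have hy1 : ∀ n, (Z (n+1)).2 = ((Z n).1 - c)/(Z n).2 := fun n => by rw [hZs n]; rfl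
    have hrel : ∀ n, ‖(Z (n+1)).2‖ * ‖(Z n).2‖ = ‖(Z n).1 - c‖ := by
      intro n
      rw [hy1 n, norm_div, div_mul_cancel₀]
      exact norm_ne_zero_iff.2 (hy n)
    have hcne : ‖(-c : ℚ_[p])‖ = (p:ℝ) := by rw [norm_neg, hc]
    have hlt : ∀ u : ℚ_[p], ‖u‖ < p → ‖u - c‖ = p := by
      intro u h
      rw [sub_eq_add_neg, Padic.add_eq_max_of_ne (by rw [hcne]; exact ne_of_lt h), hcne,
        max_eq_right h.le]
    have hgt : ∀ u : ℚ_[p], (p:ℝ) < ‖u‖ → ‖u - c‖ = ‖u‖ := by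
      intro u h
      rw [sub_eq_add_neg, Padic.add_eq_max_of_ne (by rw [hcne]; exact (ne_of_lt h).symm),
        hcne, max_eq_left h.le]
    have hle : ∀ u : ℚ_[p], ‖u‖ ≤ p → ‖u - c‖ ≤ p := by
      intro u h
      calc ‖u - c‖ = ‖u + -c‖ := by rw [sub_eq_add_neg]
        _ ≤ max ‖u‖ ‖-c‖ := Padic.nonarchimedean u (-c)
        _ ≤ p := max_le h (le_of_eq hcne)
    have inj : Function.Injective (fun t : ℤ => (p:ℝ)^t) := (zpow_right_strictMono₀ hp1).injective
    -- the transition property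
    have H : HSeq b := by
      intro n
      have hr := hrel (n+1)
      rw [hx1 n, show n+1+1 = n+2 from rfl, hnorm (n+2), hnorm (n+1),
        ← zpow_add₀ (ne_of_gt hppos)] at hr
      constructor
      · intro hne
        rcases lt_or_gt_of_ne hne with h | h
        · have hnlt : ‖(Z n).2‖ < (p:ℝ) := by
            rw [hnorm n]
            calc (p:ℝ)^(b n) < (p:ℝ)^(1:ℤ) := (zpow_lt_zpow_iff_right₀ hp1).2 h
              _ = p := zpow_one _
          rw [hlt _ hnlt] at hr
          have he : b (n+2) + b (n+1) = 1 := by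
            apply inj
            show (p:ℝ)^(b (n+2) + b (n+1)) = (p:ℝ)^(1:ℤ)
            rw [zpow_one]; exact hr
          rw [max_eq_right (by omega : b n ≤ 1)]
          omega
        · have hngt : (p:ℝ) < ‖(Z n).2‖ := by
            rw [hnorm n]
            calc (p:ℝ) = (p:ℝ)^(1:ℤ) := (zpow_one _).symm
              _ < (p:ℝ)^(b n) := (zpow_lt_zpow_iff_right₀ hp1).2 h
          rw [hgt _ hngt, hnorm n] at hr
          have he : b (n+2) + b (n+1) = b n := inj hr
          rw [max_eq_left (by omega : 1 ≤ b n)]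
          omega
      · intro h1
        have hnle : ‖(Z n).2‖ ≤ (p:ℝ) := by
          rw [hnorm n, h1, zpow_one]
        have h2 : (p:ℝ)^(b (n+2) + b (n+1)) ≤ (p:ℝ)^(1:ℤ) := by
          rw [zpow_one, hr]; exact hle _ hnle
        have := (zpow_le_zpow_iff_right₀ hp1).1 h2
        omega
    -- the boundedness property
    obtain ⟨N, hN⟩ := pow_unbounded_of_one_lt M hp1
    have hB : ∀ n, b n ≤ (N:ℤ) := by
      intro n
      have h1 : (p:ℝ)^(b n) ≤ M := by
        rw [← hnorm n]
        exact le_trans (le_max_right _ _) (hM n)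
      have h2 : (p:ℝ)^(b n) < (p:ℝ)^((N:ℕ)) := lt_of_le_of_lt h1 hN
      rw [← zpow_natCast] at h2
      have h3 := (zpow_lt_zpow_iff_right₀ hp1).1 h2
      omega
    have hz2n : ‖z.2‖ = (p:ℝ)^(b 0) := hnorm 0
    -- step 0 relation helper
    have hrel0 : ‖(Z 1).2‖ * ‖z.2‖ = ‖z.1 - c‖ := by
      have := hrel 0
      rwa [hZ0] at this
    rcases lt_trichotomy ‖z.1‖ ((p:ℝ)) with hxa | hxa | hxa
    · -- ‖x‖ < p
      by_cases hgood : b 0 = 0 ∨ b 0 = 1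
      · refine Or.inl (Or.inl (Or.inl (Or.inl (Or.inl (Or.inl ⟨hQ, ?_, ?_⟩)))))
        · rw [hc]; exact hxa
        · rcases hgood with h | h
          · left; rw [hz2n, h, zpow_zero]
          · right; rw [hz2n, h, zpow_one, hc]
      · exfalso
        push_neg at hgood
        have hs0 : b 1 + b 0 = 1 := by
          have hr := hrel0
          rw [hnorm 1, hz2n, ← zpow_add₀ (ne_of_gt hppos), hlt _ hxa] at hr
          apply inj
          show (p:ℝ)^(b 1 + b 0) = (p:ℝ)^(1:ℤ)
          rw [zpow_one]; exact hr
        rcases le_or_gt (b 0) (-1) with hneg | hpos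
        · -- b0 ≤ −1 : b1 = 1 − b0 ≥ 2, b2 = b0 ≤ 0
          have e2 := (H 0).1 (by omega)
          rw [max_eq_right (by omega), show (0:ℕ)+2 = 2 from rfl, show (0:ℕ)+1 = 1 from rfl] at e2
          refine escape (H.shift 1) (fun n => hB (1+n)) ?_ ?_
          · show 2 ≤ b 1; omega
          · show b 2 ≤ 0; omega
        · -- b0 ≥ 2 : b1 ≤ 0
          exact escape H hB (by omega) (by omega)
    · -- ‖x‖ = p
      by_cases hgood : b 0 ≤ 1
      · refine Or.inl (Or.inl (Or.inl (Or.inl (Or.inl (Or.inr ⟨hQ, ?_, ?_⟩)))))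
        · rw [hc]; exact hxa
        · rw [hz2n, hc]
          calc (p:ℝ)^(b 0) ≤ (p:ℝ)^(1:ℤ) := (zpow_le_zpow_iff_right₀ hp1).2 hgood
            _ = p := zpow_one _
      · exfalso
        have hs0 : b 1 + b 0 ≤ 1 := by
          have hr := hrel0
          rw [hnorm 1, hz2n, ← zpow_add₀ (ne_of_gt hppos)] at hr
          have h2 : (p:ℝ)^(b 1 + b 0) ≤ (p:ℝ)^(1:ℤ) := by
            rw [zpow_one, hr]; exact hle _ (le_of_eq hxa)
          exact (zpow_le_zpow_iff_right₀ hp1).1 h2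
        exact escape H hB (by omega) (by omega)
    · -- p < ‖x‖
      have hx0 : z.1 ≠ 0 := by
        intro h
        rw [h, norm_zero] at hxa
        linarith
      set a : ℤ := -(z.1.valuation) with hadef
      have hax : ‖z.1‖ = (p:ℝ)^a := Padic.norm_eq_zpow_neg_valuation hx0
      have ha2 : 2 ≤ a := by
        have h : (p:ℝ)^(1:ℤ) < (p:ℝ)^a := by rw [zpow_one, ← hax]; exact hxa
        have := (zpow_lt_zpow_iff_right₀ hp1).1 h
        omega
      have hs0 : b 1 + b 0 = a := by
        have hr := hrel0
        rw [hnorm 1, hz2n, ← zpow_add₀ (ne_of_gt hppos), hgt _ hxa, hax] at hr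
        exact inj hr
      rcases le_or_gt (b 0) 0 with hb0 | hb0
      · -- b0 ≤ 0 : b1 = a − b0 ≥ 2, b2 = 1 − b1 ≤ −1
        exfalso
        have e2 := (H 0).1 (by omega)
        rw [max_eq_right (by omega), show (0:ℕ)+2 = 2 from rfl, show (0:ℕ)+1 = 1 from rfl] at e2
        refine escape (H.shift 1) (fun n => hB (1+n)) ?_ ?_
        · show 2 ≤ b 1; omega
        · show b 2 ≤ 0; omega
      · rcases le_or_gt a (b 0) with hba | hba
        · -- b0 ≥ a ≥ 2, b1 ≤ 0
          exact (escape H hB (by omega) (by omega)).elim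
        · -- 1 ≤ b0 < a
          have hb1 : 1 ≤ b 1 := by omega
          have hIns : InS a (b 0) := by
            by_cases hb01 : b 0 = 1
            · by_cases ha3 : 3 ≤ a
              · exfalso
                have e3 := (H 0).2 hb01
                rw [show (0:ℕ)+2 = 2 from rfl, show (0:ℕ)+1 = 1 from rfl] at e3
                refine escape (H.shift 1) (fun n => hB (1+n)) ?_ ?_
                · show 2 ≤ b 1; omega
                · show b 2 ≤ 0; omega
              · refine ⟨0, Or.inl ⟨?_, ?_, ?_⟩⟩
                · rw [show (2*0 : ℕ) = 0 from rfl, Fz_zero]; omega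
                · rw [show (2*0+3 : ℕ) = 3 from rfl, Fz_three]; omega
                · rw [show (2*0+1 : ℕ) = 1 from rfl, show (2*0 : ℕ) = 0 from rfl, Fz_one, Fz_zero]
                  omega
            · have h1b : InS (b 0) (b 1) :=
                stair_aux (b 0).toNat b H hB (by omega) (by omega) hb1
              have hp' := h1b.pull (by omega) hb1
              rwa [show b 0 + b 1 = a from by omega] at hp'
          -- convert InS to set membership
          obtain ⟨m, ⟨hm1, hm2, hm3⟩ | ⟨hm1, hm2, hm3⟩⟩ := hIns
          · have hm1' : ((Fb (2*m) : ℤ)) < a := hm1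
            have hm3' : (b 0) * ((Fb (2*m+1) : ℤ)) = a * ((Fb (2*m) : ℤ)) + (-1) := by
              rw [show a * ((Fb (2*m) : ℤ)) + (-1) = a * ((Fb (2*m) : ℤ)) - 1 from by ring]
              exact hm3
            by_cases hsplit : a ≤ Fz (2*m+2)
            · -- Codd m
              refine Or.inl (Or.inl (Or.inl (Or.inl (Or.inr ?_))))
              refine ⟨m, hQ, ?_, ?_, ?_⟩
              · rw [hc, hax]; exact npow_lt_zpow hm1'
              · rw [hc, hax]; exact zpow_le_npow hsplit
              · have he := eqpow (p := p) hm3'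
                rw [zpow_neg_one] at he
                rw [hz2n, hax, hc]
                exact he
            · -- Dodd (m+1)
              push_neg at hsplit
              refine Or.inl (Or.inr ?_)
              refine ⟨m, hQ, ?_, ?_, ?_⟩
              · rw [hc, hax]
                exact npow_lt_zpow (show ((Fb (2*(m+1)) : ℤ)) < a from hsplit)
              · rw [hc, hax]
                exact zpow_lt_npow (show a < ((Fb (2*(m+1)+1) : ℤ)) from hm2)
              · have he := eqpow (p := p)
                  (show (b 0) * ((Fb (2*(m+1)-1) : ℤ)) = a * ((Fb (2*(m+1)-2) : ℤ)) + (-1) from hm3')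
                rw [zpow_neg_one] at he
                rw [hz2n, hax, hc]
                exact he
          · have hm1' : ((Fb (2*m+1) : ℤ)) < a := hm1
            have hm3' : (b 0) * ((Fb (2*m+2) : ℤ)) = a * ((Fb (2*m+1) : ℤ)) + 1 := hm3
            by_cases hsplit : a ≤ Fz (2*m+3)
            · -- Ceven m
              refine Or.inl (Or.inl (Or.inl (Or.inr ?_)))
              refine ⟨m, hQ, ?_, ?_, ?_⟩
              · rw [hc, hax]; exact npow_lt_zpow hm1'
              · rw [hc, hax]; exact zpow_le_npow hsplit
              · have he := eqpow (p := p) hm3'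
                rw [zpow_one] at he
                rw [hz2n, hax, hc]
                exact he
            · -- Deven (m+1)
              push_neg at hsplit
              refine Or.inr ?_
              refine ⟨m, hQ, ?_, ?_, ?_⟩
              · rw [hc, hax]
                exact npow_lt_zpow (show ((Fb (2*(m+1)+1) : ℤ)) < a from hsplit)
              · rw [hc, hax]
                exact zpow_lt_npow (show a < ((Fb (2*(m+1)+2) : ℤ)) from hm2)
              · have he := eqpow (p := p)
                  (show (b 0) * ((Fb (2*(m+1)) : ℤ)) = a * ((Fb (2*(m+1)-1) : ℤ)) + 1 from hm3')
                rw [zpow_one] at he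
                rw [hz2n, hax, hc]
                exact he
end

section
/- Assume |c| > p. Then μ₂(K⁻) = +∞. -/
variable {p : ℕ}

namespace Stmt3Aux

open Metric MeasureTheory
open scoped ENNReal NNReal


-- === from previous chunks (assumed) ===
lemma hp1R [hp : Fact p.Prime] : (1:ℝ) < (p:ℝ) := by exact_mod_cast hp.out.one_lt
lemma hp0R [hp : Fact p.Prime] : (0:ℝ) < (p:ℝ) := lt_trans zero_lt_one hp1R
lemma norm_eq_of_sub_lt [hp : Fact p.Prime] {a b : ℚ_[p]} (h : ‖a - b‖ < ‖b‖) : ‖a‖ = ‖b‖ := by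
  have h3 := Padic.add_eq_max_of_ne (q := a - b) (r := b) (ne_of_lt h)
  rw [sub_add_cancel] at h3
  rw [h3, max_eq_right h.le]
lemma zmod_zero_norm_le [hp : Fact p.Prime] {a : ℤ} (h : (a : ZMod p) = 0) :
    ‖((a : ℚ_[p]))‖ ≤ (p:ℝ)^(-1:ℤ) := by
  have hd : (p:ℤ) ∣ a := (ZMod.intCast_zmod_eq_zero_iff_dvd a p).mp h
  have h1 : ‖((a : ℚ_[p]))‖ < 1 := (Padic.norm_intCast_lt_one_iff (k := a)).mpr hd
  have h2 := (Padic.norm_le_pow_iff_norm_lt_pow_add_one ((a : ℤ) : ℚ_[p]) (-1)).mpr (by simpa using h1)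
  simpa using h2
lemma val_intCast_eq {p : ℕ} [hp : Fact p.Prime] (x : ZMod p) : ((x.val : ℤ) : ZMod p) = x := by
  push_cast
  simp [ZMod.natCast_val, ZMod.cast_id]
lemma norm_val_le_one [hp : Fact p.Prime] (x : ZMod p) : ‖((x.val : ℚ_[p]))‖ ≤ 1 := by
  have := Padic.norm_int_le_one (p := p) (x.val : ℤ)
  push_cast at this ⊢
  exact this
lemma norm_val_eq_one [hp : Fact p.Prime] {x : ZMod p} (hx : x ≠ 0) : ‖((x.val : ℚ_[p]))‖ = 1 := by
  rcases lt_or_eq_of_le (norm_val_le_one x) with h | h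
  · exfalso
    have h1 : ‖(((x.val : ℤ)) : ℚ_[p])‖ < 1 := by push_cast; exact_mod_cast h
    have hd : (p:ℤ) ∣ (x.val : ℤ) := Padic.norm_intCast_lt_one_iff.mp h1
    have h0 : ((x.val : ℤ) : ZMod p) = 0 := (ZMod.intCast_zmod_eq_zero_iff_dvd _ p).mpr hd
    rw [val_intCast_eq] at h0
    exact hx h0
  · exact h

def mseq (V : ℕ) : ℕ → ℕ
  | 0 => V - 1
  | 1 => V
  | (k+2) => mseq V (k+1) + mseq V k
def eseq (p : ℕ) (e1 : ZMod p) : ℕ → ZMod p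
  | 0 => 1
  | 1 => e1
  | (k+2) => eseq p e1 (k+1) * eseq p e1 k
def dseq (p : ℕ) (e1 γ : ZMod p) : ℕ → ZMod p
  | 0 => e1 - γ
  | (k+1) => eseq p e1 k
lemma eseq_ne [hp : Fact p.Prime] {e1 : ZMod p} (he1 : e1 ≠ 0) : ∀ k, eseq p e1 k ≠ 0 := by
  have key : ∀ k, eseq p e1 k ≠ 0 ∧ eseq p e1 (k+1) ≠ 0 := by
    intro k
    induction k with
    | zero => exact ⟨one_ne_zero, he1⟩
    | succ k ih => exact ⟨ih.2, mul_ne_zero ih.2 ih.1⟩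
  exact fun k => (key k).1
lemma dseq_ne [hp : Fact p.Prime] {e1 γ : ZMod p} (he1 : e1 ≠ 0) (hne : e1 ≠ γ) :
    ∀ k, dseq p e1 γ k ≠ 0 := by
  intro k
  match k with
  | 0 => exact sub_ne_zero.mpr hne
  | (k+1) => exact eseq_ne he1 k
-- === end copies ===

section Dyn
variable [hp : Fact p.Prime] (c : ℚ_[p]) (V : ℕ) (e1 γ : ZMod p)

noncomputable def ycen (k : ℕ) : ℚ_[p] :=
  ((eseq p e1 k).val : ℚ_[p]) * (p:ℚ_[p])^(-(mseq V k : ℤ))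

noncomputable def xcen (k : ℕ) : ℚ_[p] :=
  c + ((eseq p e1 k).val : ℚ_[p]) * ((dseq p e1 γ k).val : ℚ_[p]) * (p:ℚ_[p])^(-(mseq V (k+1) : ℤ))

noncomputable def Cset (k : ℕ) : Set (ℚ_[p] × ℚ_[p]) :=
  (closedBall (xcen c V e1 γ k) ((p:ℝ)^((mseq V (k+1) : ℤ) - 1))) ×ˢ
    (closedBall (ycen V e1 k) ((p:ℝ)^((mseq V k : ℤ) - 1)))

def Rset : Set (ℚ_[p] × ℚ_[p]) :=
  {z | ‖z.1‖ ≤ (p:ℝ)^((V:ℤ)-1) ∧ (p:ℝ) ≤ ‖z.2‖ ∧ ‖z.2‖ ≤ (p:ℝ)^((V:ℤ)-1)}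

variable {c V e1 γ}
variable (hV2 : 2 ≤ V) (hcn : ‖c‖ = (p:ℝ)^(V:ℤ))
  (hγ : ‖c - (γ.val : ℚ_[p]) * (p:ℚ_[p])^(-(V:ℤ))‖ ≤ (p:ℝ)^((V:ℤ)-1))
  (he1 : e1 ≠ 0) (hγ0 : γ ≠ 0) (hne : e1 ≠ γ)

lemma hpQ : ((p:ℚ_[p])) ≠ 0 := by
  exact_mod_cast (Nat.cast_ne_zero (R := ℚ_[p])).mpr hp.out.ne_zero

lemma ppow_mul (a b : ℤ) : (p:ℝ)^a * (p:ℝ)^b = (p:ℝ)^(a+b) :=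
  (zpow_add₀ (ne_of_gt hp0R) a b).symm

lemma p_mul_pow [hp : Fact p.Prime] (a : ℤ) : (p:ℝ) * (p:ℝ)^(a-1) = (p:ℝ)^a := by
  have h := ppow_mul (p := p) 1 (a-1)
  rw [zpow_one] at h
  rw [h]
  congr 1
  ring

lemma p_div_pow [hp : Fact p.Prime] (a b : ℤ) : (p:ℝ)^a / (p:ℝ)^b = (p:ℝ)^(a-b) :=
  (zpow_sub₀ (ne_of_gt hp0R) a b).symm

include he1 in
lemma mem_y_norm {k : ℕ} {y : ℚ_[p]}
    (h : y ∈ closedBall (ycen V e1 k) ((p:ℝ)^((mseq V k : ℤ) - 1))) :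
    ‖y‖ = (p:ℝ)^(mseq V k : ℤ) := by
  have hyc : ‖ycen V e1 k‖ = (p:ℝ)^(mseq V k : ℤ) := by
    rw [ycen, norm_mul, norm_val_eq_one (eseq_ne he1 k), Padic.norm_p_zpow, one_mul, neg_neg]
  rw [Metric.mem_closedBall, dist_eq_norm] at h
  have hlt : ‖y - ycen V e1 k‖ < ‖ycen V e1 k‖ := by
    rw [hyc]
    exact lt_of_le_of_lt h (zpow_lt_zpow_right₀ hp1R (by omega))
  rw [norm_eq_of_sub_lt hlt, hyc]

include hV2 hcn in
lemma Rinv {z : ℚ_[p] × ℚ_[p]} (hz : z ∈ Rset (p := p) V) : g c z ∈ Rset (p := p) V := by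
  obtain ⟨h1, h2, h3⟩ := hz
  have hb : (0:ℝ) < ‖z.2‖ := lt_of_lt_of_le hp0R h2
  have hac : ‖z.1 - c‖ = (p:ℝ)^(V:ℤ) := by
    have hcV : ‖(-c)‖ = (p:ℝ)^(V:ℤ) := by rw [norm_neg, hcn]
    have hlt : ‖(z.1 - c) - (-c)‖ < ‖(-c)‖ := by
      have he : (z.1 - c) - (-c) = z.1 := by ring
      rw [he, hcV]
      exact lt_of_le_of_lt h1 (zpow_lt_zpow_right₀ hp1R (by omega))
    have := norm_eq_of_sub_lt hlt
    rw [hcV] at this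
    exact this
  refine ⟨h3, ?_, ?_⟩
  · show (p:ℝ) ≤ ‖(z.1 - c)/z.2‖
    rw [norm_div, hac, le_div_iff₀ hb]
    calc (p:ℝ) * ‖z.2‖ ≤ (p:ℝ) * (p:ℝ)^((V:ℤ)-1) :=
          mul_le_mul_of_nonneg_left h3 (le_of_lt hp0R)
      _ = (p:ℝ)^(V:ℤ) := p_mul_pow _
  · show ‖(z.1 - c)/z.2‖ ≤ (p:ℝ)^((V:ℤ)-1)
    rw [norm_div, hac, div_le_iff₀ hb]
    calc (p:ℝ)^(V:ℤ) = (p:ℝ)^((V:ℤ)-1) * (p:ℝ) := by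
          rw [mul_comm, p_mul_pow]
      _ ≤ (p:ℝ)^((V:ℤ)-1) * ‖z.2‖ :=
          mul_le_mul_of_nonneg_left h2 (by positivity)

include hV2 he1 hne in
lemma step0 {z : ℚ_[p] × ℚ_[p]} (hz : z ∈ Cset c V e1 γ 0) : g c z ∈ Rset (p := p) V := by
  obtain ⟨hx, hy⟩ := hz
  have hm0 : (mseq V 0 : ℤ) = (V:ℤ) - 1 := by
    show ((V - 1 : ℕ) : ℤ) = (V:ℤ) - 1
    omega
  have hm1 : (mseq V 1 : ℤ) = (V:ℤ) := rfl
  have hyn : ‖z.2‖ = (p:ℝ)^((V:ℤ)-1) := by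
    rw [← hm0]
    exact mem_y_norm he1 hy
  have hb : (0:ℝ) < ‖z.2‖ := by rw [hyn]; exact zpow_pos hp0R _
  have hxc : ‖z.1 - c‖ = (p:ℝ)^(V:ℤ) := by
    rw [Metric.mem_closedBall, dist_eq_norm] at hx
    set t : ℚ_[p] := ((eseq p e1 0).val : ℚ_[p]) * ((dseq p e1 γ 0).val : ℚ_[p]) *
        (p:ℚ_[p])^(-(mseq V 1 : ℤ)) with ht
    have htn : ‖t‖ = (p:ℝ)^(V:ℤ) := by
      rw [ht, norm_mul, norm_mul, norm_val_eq_one (eseq_ne he1 0),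
        norm_val_eq_one (dseq_ne he1 hne 0), Padic.norm_p_zpow, one_mul, one_mul, neg_neg, hm1]
    have hd : ‖(z.1 - c) - t‖ ≤ (p:ℝ)^((V:ℤ)-1) := by
      have : z.1 - (xcen c V e1 γ 0) = (z.1 - c) - t := by
        rw [xcen, ht]; ring
      rw [← this]
      refine le_trans hx ?_
      rw [hm1]
    have hlt : ‖(z.1 - c) - t‖ < ‖t‖ := by
      rw [htn]
      exact lt_of_le_of_lt hd (zpow_lt_zpow_right₀ hp1R (by omega))
    rw [norm_eq_of_sub_lt hlt, htn]
  have hw : ‖(z.1 - c)/z.2‖ = (p:ℝ)^(1:ℤ) := by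
    rw [norm_div, hxc, hyn, p_div_pow]
    congr 1
    ring
  refine ⟨by rw [show (g c z).1 = z.2 from rfl, hyn], ?_, ?_⟩
  · show (p:ℝ) ≤ ‖(z.1 - c)/z.2‖
    rw [hw, zpow_one]
  · show ‖(z.1 - c)/z.2‖ ≤ (p:ℝ)^((V:ℤ)-1)
    rw [hw]
    exact zpow_le_zpow_right₀ (le_of_lt hp1R) (by omega)


lemma val_natCast_eq {p : ℕ} [hp : Fact p.Prime] (x : ZMod p) : ((x.val : ℕ) : ZMod p) = x := by
  simp [ZMod.natCast_val, ZMod.cast_id]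

-- mseq facts
lemma mseq_pair (hV2 : 2 ≤ V) : ∀ k, (k + 1 ≤ mseq V k) ∧ (k + 2 ≤ mseq V (k+1)) := by
  intro k
  induction k with
  | zero =>
    refine ⟨?_, ?_⟩
    · show 1 ≤ V - 1; omega
    · show 2 ≤ V; omega
  | succ k ih =>
    refine ⟨ih.2, ?_⟩
    have h : mseq V (k+1+1) = mseq V (k+1) + mseq V k := rfl
    omega

lemma mseq_ge (hV2 : 2 ≤ V) (k : ℕ) : k + 1 ≤ mseq V k := (mseq_pair hV2 k).1

lemma mseq_mono (hV2 : 2 ≤ V) : Monotone (mseq V) := by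
  apply monotone_nat_of_le_succ
  intro k
  match k with
  | 0 => show V - 1 ≤ V; omega
  | (k+1) =>
    have h : mseq V (k+1+1) = mseq V (k+1) + mseq V k := rfl
    omega

lemma mseq_ge_V (hV2 : 2 ≤ V) : ∀ k, V ≤ mseq V (k+1) := by
  intro k
  have := mseq_mono hV2 (Nat.le_add_left 1 k)
  simpa [mseq] using this

lemma mseq_ge_V1 (hV2 : 2 ≤ V) (k : ℕ) : V + 1 ≤ mseq V (k+2) := by
  have h : mseq V (k+2) = mseq V (k+1) + mseq V k := rfl
  have h1 := mseq_ge_V hV2 k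
  have h2 := mseq_ge hV2 k
  omega

include hV2 hcn hγ he1 hne in
set_option maxHeartbeats 1000000 in
lemma Tbound0 :
    ‖(((eseq p e1 1).val : ℚ_[p]) - ((eseq p e1 0).val : ℚ_[p]) * ((dseq p e1 γ 0).val : ℚ_[p]))
        * (p:ℚ_[p])^(-(mseq V 1 : ℤ)) - c‖ ≤ (p:ℝ)^((mseq V 1 : ℤ) - 1) := by
  set A : ℚ_[p] := ((eseq p e1 1).val : ℚ_[p]) with hA
  set B : ℚ_[p] := ((eseq p e1 0).val : ℚ_[p]) with hB
  set D : ℚ_[p] := ((dseq p e1 γ 0).val : ℚ_[p]) with hD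
  set G : ℚ_[p] := (γ.val : ℚ_[p]) with hG
  have hMV : ((mseq V 1 : ℕ) : ℤ) = (V:ℤ) := rfl
  rw [hMV]
  have hsplit2 : (A - B * D) * (p:ℚ_[p])^(-(V:ℤ)) - c
      = (A - B * D - G) * (p:ℚ_[p])^(-(V:ℤ)) - (c - G * (p:ℚ_[p])^(-(V:ℤ))) := by ring
  have h1 : ‖(A - B * D - G) * (p:ℚ_[p])^(-(V:ℤ))‖ ≤ (p:ℝ)^((V:ℤ) - 1) := by
    have hzm : ((((eseq p e1 1).val : ℤ) - ((eseq p e1 0).val : ℤ) * ((dseq p e1 γ 0).val : ℤ)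
        - ((γ.val : ℤ)) : ℤ) : ZMod p) = 0 := by
      push_cast [val_natCast_eq]
      show e1 - (1 : ZMod p) * (e1 - γ) - γ = 0
      ring
    have hcast : A - B * D - G = ((((eseq p e1 1).val : ℤ) - ((eseq p e1 0).val : ℤ) *
        ((dseq p e1 γ 0).val : ℤ) - ((γ.val : ℤ)) : ℤ) : ℚ_[p]) := by
      rw [hA, hB, hD, hG]
      push_cast
      ring
    rw [norm_mul, hcast, Padic.norm_p_zpow, neg_neg]
    calc ‖_‖ * (p:ℝ)^(V:ℤ) ≤ (p:ℝ)^(-1:ℤ) * (p:ℝ)^(V:ℤ) :=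
          mul_le_mul_of_nonneg_right (zmod_zero_norm_le hzm) (le_of_lt (zpow_pos hp0R _))
      _ = (p:ℝ)^((V:ℤ)-1) := by rw [ppow_mul, show (-1) + (V:ℤ) = (V:ℤ)-1 by ring]
  rw [hsplit2, sub_eq_add_neg]
  refine le_trans (Padic.nonarchimedean _ _) (max_le h1 ?_)
  rw [norm_neg]
  exact hγ

include hV2 hcn hγ he1 hne in
lemma TboundS (k' : ℕ) :
    ‖(((eseq p e1 (k'+2)).val : ℚ_[p]) - ((eseq p e1 (k'+1)).val : ℚ_[p]) * ((dseq p e1 γ (k'+1)).val : ℚ_[p]))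
        * (p:ℚ_[p])^(-(mseq V (k'+2) : ℤ)) - c‖ ≤ (p:ℝ)^((mseq V (k'+2) : ℤ) - 1) := by
  set A : ℚ_[p] := ((eseq p e1 (k'+2)).val : ℚ_[p]) with hA
  set B : ℚ_[p] := ((eseq p e1 (k'+1)).val : ℚ_[p]) with hB
  set D : ℚ_[p] := ((dseq p e1 γ (k'+1)).val : ℚ_[p]) with hD
  set M1 : ℤ := ((mseq V (k'+2) : ℕ) : ℤ) with hM1
  have h1 : ‖(A - B * D) * (p:ℚ_[p])^(-M1)‖ ≤ (p:ℝ)^(M1 - 1) := by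
    have hzm : ((((eseq p e1 (k'+2)).val : ℤ) - ((eseq p e1 (k'+1)).val : ℤ) *
        ((dseq p e1 γ (k'+1)).val : ℤ) : ℤ) : ZMod p) = 0 := by
      push_cast [val_natCast_eq]
      show eseq p e1 (k'+2) - eseq p e1 (k'+1) * eseq p e1 k' = 0
      rw [show eseq p e1 (k'+2) = eseq p e1 (k'+1) * eseq p e1 k' from rfl]
      ring
    have hcast : A - B * D = ((((eseq p e1 (k'+2)).val : ℤ) - ((eseq p e1 (k'+1)).val : ℤ) *
        ((dseq p e1 γ (k'+1)).val : ℤ) : ℤ) : ℚ_[p]) := by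
      rw [hA, hB, hD]
      push_cast
      ring
    rw [norm_mul, hcast, Padic.norm_p_zpow, neg_neg]
    calc ‖_‖ * (p:ℝ)^M1 ≤ (p:ℝ)^(-1:ℤ) * (p:ℝ)^M1 :=
          mul_le_mul_of_nonneg_right (zmod_zero_norm_le hzm) (le_of_lt (zpow_pos hp0R _))
      _ = (p:ℝ)^(M1-1) := by rw [ppow_mul, show (-1) + M1 = M1-1 by ring]
  have h2 : ‖c‖ ≤ (p:ℝ)^(M1 - 1) := by
    rw [hcn]
    apply zpow_le_zpow_right₀ (le_of_lt hp1R)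
    have hge := mseq_ge_V1 (V := V) hV2 k'
    rw [hM1]
    omega
  have hsplit2 : (A - B * D) * (p:ℚ_[p])^(-M1) - c
      = (A - B * D) * (p:ℚ_[p])^(-M1) + (-c) := by ring
  rw [hsplit2]
  refine le_trans (Padic.nonarchimedean _ _) (max_le h1 ?_)
  rw [norm_neg]
  exact h2

include hV2 hcn hγ he1 hne in
lemma Tbound (k : ℕ) :
    ‖(((eseq p e1 (k+1)).val : ℚ_[p]) - ((eseq p e1 k).val : ℚ_[p]) * ((dseq p e1 γ k).val : ℚ_[p]))
        * (p:ℚ_[p])^(-(mseq V (k+1) : ℤ)) - c‖ ≤ (p:ℝ)^((mseq V (k+1) : ℤ) - 1) := by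
  match k with
  | 0 => exact Tbound0 hV2 hcn hγ he1 hne
  | (k'+1) => exact TboundS hV2 hcn hγ he1 hne k'

include hV2 hcn hγ he1 hne in
lemma stepS (k : ℕ) {z : ℚ_[p] × ℚ_[p]} (hz : z ∈ Cset c V e1 γ (k+1)) :
    g c z ∈ Cset c V e1 γ k := by
  obtain ⟨hx, hy⟩ := hz
  rw [Metric.mem_closedBall, dist_eq_norm] at hx hy
  have hyn : ‖z.2‖ = (p:ℝ)^(mseq V (k+1) : ℤ) :=
    mem_y_norm he1 (by rw [Metric.mem_closedBall, dist_eq_norm]; exact hy)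
  have hb : (0:ℝ) < ‖z.2‖ := by rw [hyn]; exact zpow_pos hp0R _
  have hbne : z.2 ≠ 0 := by
    intro h0; rw [h0, norm_zero] at hb; exact lt_irrefl _ hb
  set M0 : ℤ := (mseq V k : ℤ) with hM0
  set M1 : ℤ := (mseq V (k+1) : ℤ) with hM1
  set M2 : ℤ := (mseq V (k+2) : ℤ) with hM2
  have hM : M2 = M1 + M0 := by
    rw [hM0, hM1, hM2, show mseq V (k+2) = mseq V (k+1) + mseq V k from rfl]
    push_cast; ring
  set A : ℚ_[p] := ((eseq p e1 (k+1)).val : ℚ_[p]) with hA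
  set B : ℚ_[p] := ((eseq p e1 k).val : ℚ_[p]) with hB
  set D : ℚ_[p] := ((dseq p e1 γ k).val : ℚ_[p]) with hD
  have hxx : ‖z.1 - (c + A * B * (p:ℚ_[p])^(-M2))‖ ≤ (p:ℝ)^(M2 - 1) := by
    have hxc : xcen c V e1 γ (k+1) = c + A * B * (p:ℚ_[p])^(-M2) := by
      rw [xcen, hA, hB, hM2]
      rfl
    rw [← hxc]
    exact hx
  have hyy : ‖z.2 - A * (p:ℚ_[p])^(-M1)‖ ≤ (p:ℝ)^(M1 - 1) := by
    have hyc : ycen V e1 (k+1) = A * (p:ℚ_[p])^(-M1) := by rw [ycen, hA, hM1]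
    rw [← hyc]
    exact hy
  have hnormB : ‖B‖ ≤ 1 := norm_val_le_one _
  constructor
  · -- first coordinate
    show (g c z).1 ∈ closedBall (xcen c V e1 γ k) ((p:ℝ)^(M1 - 1))
    rw [Metric.mem_closedBall, dist_eq_norm]
    show ‖z.2 - xcen c V e1 γ k‖ ≤ (p:ℝ)^(M1-1)
    have hsplit : z.2 - xcen c V e1 γ k
        = (z.2 - A * (p:ℚ_[p])^(-M1)) + ((A - B * D) * (p:ℚ_[p])^(-M1) - c) := by
      rw [xcen, ← hB, ← hD, ← hM1]
      ring
    have hT := Tbound (c := c) (V := V) (e1 := e1) (γ := γ) hV2 hcn hγ he1 hne k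
    rw [← hA, ← hB, ← hD, ← hM1] at hT
    rw [hsplit]
    exact le_trans (Padic.nonarchimedean _ _) (max_le hyy hT)
  · -- second coordinate
    show (g c z).2 ∈ closedBall (ycen V e1 k) ((p:ℝ)^(M0 - 1))
    rw [Metric.mem_closedBall, dist_eq_norm]
    show ‖(z.1 - c)/z.2 - ycen V e1 k‖ ≤ (p:ℝ)^(M0-1)
    have hyc : ycen V e1 k = B * (p:ℚ_[p])^(-M0) := by rw [ycen, hB, hM0]
    have hdiv : (z.1 - c)/z.2 - B * (p:ℚ_[p])^(-M0)
        = ((z.1 - c) - z.2 * (B * (p:ℚ_[p])^(-M0))) / z.2 := by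
      field_simp
    have hPP : ((p:ℚ_[p]))^(-M2) = (p:ℚ_[p])^(-M1) * (p:ℚ_[p])^(-M0) := by
      rw [← zpow_add₀ (hpQ (p := p))]
      congr 1
      rw [hM]
      ring
    have hN : (z.1 - c) - z.2 * (B * (p:ℚ_[p])^(-M0))
        = (z.1 - (c + A * B * (p:ℚ_[p])^(-M2))) - (B * (p:ℚ_[p])^(-M0)) * (z.2 - A * (p:ℚ_[p])^(-M1)) := by
      rw [hPP]
      ring
    have hNbound : ‖(z.1 - c) - z.2 * (B * (p:ℚ_[p])^(-M0))‖ ≤ (p:ℝ)^(M2 - 1) := by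
      rw [hN, sub_eq_add_neg]
      refine le_trans (Padic.nonarchimedean _ _) (max_le hxx ?_)
      rw [norm_neg, norm_mul, norm_mul, Padic.norm_p_zpow, neg_neg]
      calc ‖B‖ * (p:ℝ)^M0 * ‖z.2 - A * (p:ℚ_[p])^(-M1)‖
          ≤ 1 * (p:ℝ)^M0 * (p:ℝ)^(M1-1) := by
            apply mul_le_mul (mul_le_mul_of_nonneg_right hnormB (le_of_lt (zpow_pos hp0R _))) hyy
              (norm_nonneg _)
            positivity
        _ = (p:ℝ)^(M2-1) := by
            rw [one_mul, ppow_mul]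
            congr 1
            omega
    rw [hyc, hdiv, norm_div, hyn, div_le_iff₀ (zpow_pos hp0R M1)]
    calc ‖(z.1 - c) - z.2 * (B * (p:ℚ_[p])^(-M0))‖ ≤ (p:ℝ)^(M2 - 1) := hNbound
      _ = (p:ℝ)^(M0-1) * (p:ℝ)^M1 := by
          rw [ppow_mul]
          congr 1
          omega

include he1 in
lemma Cne {k : ℕ} {z : ℚ_[p] × ℚ_[p]} (hz : z ∈ Cset c V e1 γ k) : z.2 ≠ 0 := by
  have h := mem_y_norm (V := V) he1 hz.2
  intro h0
  rw [h0, norm_zero] at h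
  exact absurd h.symm (ne_of_gt (zpow_pos hp0R _))

lemma Rne {z : ℚ_[p] × ℚ_[p]} (hz : z ∈ Rset (p := p) V) : z.2 ≠ 0 := by
  intro h0
  have := hz.2.1
  rw [h0, norm_zero] at this
  exact absurd (lt_of_lt_of_le hp0R this) (lt_irrefl 0)

lemma Rb {z : ℚ_[p] × ℚ_[p]} (hz : z ∈ Rset (p := p) V) : pnorm z ≤ (p:ℝ)^((V:ℤ)-1) :=
  max_le hz.1 hz.2.2

include hV2 hcn he1 in
lemma Cb {k : ℕ} {z : ℚ_[p] × ℚ_[p]} (hz : z ∈ Cset c V e1 γ k) :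
    pnorm z ≤ (p:ℝ)^((mseq V (k+1) : ℤ)) := by
  obtain ⟨hx, hy⟩ := hz
  rw [Metric.mem_closedBall, dist_eq_norm] at hx
  have hxcen : ‖xcen c V e1 γ k‖ ≤ (p:ℝ)^((mseq V (k+1) : ℤ)) := by
    rw [xcen]
    refine le_trans (Padic.nonarchimedean _ _) (max_le ?_ ?_)
    · rw [hcn]
      apply zpow_le_zpow_right₀ (le_of_lt hp1R)
      exact_mod_cast mseq_ge_V hV2 k
    · rw [norm_mul, norm_mul, Padic.norm_p_zpow, neg_neg]
      calc ‖((eseq p e1 k).val : ℚ_[p])‖ * ‖((dseq p e1 γ k).val : ℚ_[p])‖ * (p:ℝ)^((mseq V (k+1) : ℤ))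
          ≤ 1 * 1 * (p:ℝ)^((mseq V (k+1) : ℤ)) := by
            apply mul_le_mul _ le_rfl (le_of_lt (zpow_pos hp0R _)) (by norm_num)
            exact mul_le_mul (norm_val_le_one _) (norm_val_le_one _) (norm_nonneg _) zero_le_one
        _ = (p:ℝ)^((mseq V (k+1) : ℤ)) := by rw [one_mul, one_mul]
  have h1 : ‖z.1‖ ≤ (p:ℝ)^((mseq V (k+1) : ℤ)) := by
    calc ‖z.1‖ = ‖(z.1 - xcen c V e1 γ k) + xcen c V e1 γ k‖ := by rw [sub_add_cancel]
      _ ≤ max ‖z.1 - xcen c V e1 γ k‖ ‖xcen c V e1 γ k‖ := Padic.nonarchimedean _ _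
      _ ≤ (p:ℝ)^((mseq V (k+1) : ℤ)) := by
          refine max_le (le_trans hx ?_) hxcen
          exact zpow_le_zpow_right₀ (le_of_lt hp1R) (by omega)
  have h2 : ‖z.2‖ ≤ (p:ℝ)^((mseq V (k+1) : ℤ)) := by
    rw [mem_y_norm (V := V) he1 hy]
    apply zpow_le_zpow_right₀ (le_of_lt hp1R)
    exact_mod_cast mseq_mono hV2 (Nat.le_succ k)
  exact max_le h1 h2

include hV2 hcn hγ he1 hne in
lemma C_subset_K (k : ℕ) : Cset c V e1 γ k ⊆ KMinus c := by
  intro z hz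
  have horb : ∀ i, i ≤ k → (g c)^[i] z ∈ Cset c V e1 γ (k - i) := by
    intro i
    induction i with
    | zero => intro _; simpa using hz
    | succ i ih =>
      intro hik
      have hi : i ≤ k := Nat.le_of_succ_le hik
      have h1 := ih hi
      have hkk : k - i = (k - (i+1)) + 1 := by omega
      rw [hkk] at h1
      rw [Function.iterate_succ_apply']
      exact stepS hV2 hcn hγ he1 hne _ h1
  have hR0 : (g c)^[k+1] z ∈ Rset (p := p) V := by
    have h1 := horb k le_rfl
    rw [Nat.sub_self] at h1
    rw [Function.iterate_succ_apply']
    exact step0 hV2 he1 hne h1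
  have hRall : ∀ j, (g c)^[(k+1)+j] z ∈ Rset (p := p) V := by
    intro j
    induction j with
    | zero => simpa using hR0
    | succ j ih =>
      rw [← Nat.add_assoc, Function.iterate_succ_apply']
      exact Rinv hV2 hcn ih
  constructor
  · -- QSet
    intro n
    rcases le_or_gt n k with h | h
    · have := horb n h
      exact Cne he1 this
    · have hn : (k+1) + (n - (k+1)) = n := by omega
      have := hRall (n - (k+1))
      rw [hn] at this
      exact Rne this
  · -- bounded
    refine ⟨(p:ℝ)^((mseq V (k+1) : ℤ)), fun n => ?_⟩
    rcases le_or_gt n k with h | h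
    · have := Cb hV2 hcn he1 (horb n h)
      refine le_trans this ?_
      apply zpow_le_zpow_right₀ (le_of_lt hp1R)
      exact_mod_cast mseq_mono hV2 (by omega : k - n + 1 ≤ k + 1)
    · have hn : (k+1) + (n - (k+1)) = n := by omega
      have hzR := hRall (n - (k+1))
      rw [hn] at hzR
      refine le_trans (Rb hzR) ?_
      apply zpow_le_zpow_right₀ (le_of_lt hp1R)
      have := mseq_ge_V (V := V) hV2 k
      omega

end Dyn

section MeasPart
variable [hp : Fact p.Prime]

lemma hpneR : (p:ℝ) ≠ 0 := ne_of_gt hp0R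

lemma maxideal_norm {z : ℤ_[p]} (h : z ∈ IsLocalRing.maximalIdeal ℤ_[p]) : ‖z‖ ≤ (p:ℝ)⁻¹ := by
  rw [PadicInt.maximalIdeal_eq_span_p, Ideal.mem_span_singleton] at h
  obtain ⟨w, rfl⟩ := h
  rw [norm_mul, PadicInt.norm_p]
  exact mul_le_of_le_one_right (by positivity) (PadicInt.norm_le_one w)

section Meas
variable [MeasurableSpace ℚ_[p]] [BorelSpace ℚ_[p]]
variable (μ : Measure ℚ_[p]) [μ.IsAddHaarMeasure]

lemma meas_cB_center (a : ℚ_[p]) (r : ℝ) :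
    μ (closedBall a r) = μ (closedBall (0:ℚ_[p]) r) := by
  have h : closedBall a r = (fun x => (-a) + x) ⁻¹' (closedBall (0:ℚ_[p]) r) := by
    ext x
    simp [Metric.mem_closedBall, dist_eq_norm, neg_add_eq_sub]
  rw [h, measure_preimage_add]

lemma ball_partition (j : ℕ) :
    closedBall (0:ℚ_[p]) ((p:ℝ)^(j+1)) =
      ⋃ i ∈ Finset.range p,
        closedBall ((i : ℚ_[p]) * (p:ℚ_[p])^(-(j+1:ℤ))) ((p:ℝ)^j) := by
  have hpq : ((p:ℚ_[p])) ≠ 0 := by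
    exact_mod_cast (Nat.cast_ne_zero (R := ℚ_[p])).mpr hp.out.ne_zero
  have hpr : (p:ℝ) ≠ 0 := hpneR
  ext x
  simp only [Metric.mem_closedBall, dist_eq_norm, sub_zero, Set.mem_iUnion, Finset.mem_range]
  constructor
  · intro hx
    set v : ℚ_[p] := x * (p:ℚ_[p])^((j+1:ℤ)) with hv
    have hvn : ‖v‖ ≤ 1 := by
      rw [hv, norm_mul, Padic.norm_p_zpow]
      calc ‖x‖ * (p:ℝ)^(-(j+1:ℤ)) ≤ (p:ℝ)^(j+1:ℤ) * (p:ℝ)^(-(j+1:ℤ)) := by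
            apply mul_le_mul_of_nonneg_right _ (by positivity)
            rw [← zpow_natCast (p:ℝ) (j+1)] at hx
            exact_mod_cast hx
        _ = 1 := by
            rw [← zpow_add₀ hpr]
            have : ((j:ℤ)+1) + (-(j+1:ℤ)) = 0 := by ring
            rw [this, zpow_zero]
    set z : ℤ_[p] := ⟨v, hvn⟩ with hz
    obtain ⟨n, hn, hmem⟩ := PadicInt.exists_mem_range z
    refine ⟨n, hn, ?_⟩
    have h1 : ‖z - (n : ℤ_[p])‖ ≤ (p:ℝ)⁻¹ := maxideal_norm hmem
    have h2 : ‖v - (n : ℚ_[p])‖ ≤ (p:ℝ)⁻¹ := by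
      have hcoe : ((z - (n : ℤ_[p]) : ℤ_[p]) : ℚ_[p]) = v - (n : ℚ_[p]) := by
        push_cast [hz]
        rfl
      rw [← hcoe, PadicInt.padic_norm_e_of_padicInt]
      exact h1
    have hxv : x = v * (p:ℚ_[p])^(-(j+1:ℤ)) := by
      rw [hv, mul_assoc, ← zpow_add₀ hpq]
      have : ((j:ℤ)+1) + (-(j+1:ℤ)) = 0 := by ring
      rw [this, zpow_zero, mul_one]
    have heq : x - (n : ℚ_[p]) * (p:ℚ_[p])^(-(j+1:ℤ)) = (v - (n:ℚ_[p])) * (p:ℚ_[p])^(-(j+1:ℤ)) := by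
      rw [hxv]; ring
    rw [heq, norm_mul, Padic.norm_p_zpow, neg_neg]
    calc ‖v - (n:ℚ_[p])‖ * (p:ℝ)^((j+1:ℤ))
        ≤ (p:ℝ)⁻¹ * (p:ℝ)^((j+1:ℤ)) := mul_le_mul_of_nonneg_right h2 (by positivity)
      _ = (p:ℝ)^(j:ℤ) := by
          rw [← zpow_neg_one, ← zpow_add₀ hpr]
          norm_num
      _ = (p:ℝ)^j := by rw [zpow_natCast]
  · rintro ⟨i, hi, hx⟩
    have h1 : ‖(i : ℚ_[p]) * (p:ℚ_[p])^(-(j+1:ℤ))‖ ≤ (p:ℝ)^(j+1) := by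
      rw [norm_mul, Padic.norm_p_zpow, neg_neg]
      have hle : ‖(i:ℚ_[p])‖ ≤ 1 := by
        have := Padic.norm_int_le_one (p := p) (i : ℤ)
        push_cast at this ⊢; exact this
      calc ‖(i:ℚ_[p])‖ * (p:ℝ)^((j+1:ℤ)) ≤ 1 * (p:ℝ)^((j+1:ℤ)) :=
            mul_le_mul_of_nonneg_right hle (by positivity)
        _ = (p:ℝ)^(j+1) := by rw [one_mul, ← zpow_natCast (p:ℝ) (j+1)]; norm_cast
    have h2 : ‖x - (i : ℚ_[p]) * (p:ℚ_[p])^(-(j+1:ℤ))‖ ≤ (p:ℝ)^(j+1) :=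
      le_trans hx (pow_le_pow_right₀ (le_of_lt hp1R) (by omega))
    calc ‖x‖ = ‖(x - (i : ℚ_[p]) * (p:ℚ_[p])^(-(j+1:ℤ))) + (i : ℚ_[p]) * (p:ℚ_[p])^(-(j+1:ℤ))‖ := by
          rw [sub_add_cancel]
      _ ≤ max ‖x - (i : ℚ_[p]) * (p:ℚ_[p])^(-(j+1:ℤ))‖ ‖(i : ℚ_[p]) * (p:ℚ_[p])^(-(j+1:ℤ))‖ :=
          Padic.nonarchimedean _ _
      _ ≤ (p:ℝ)^(j+1) := max_le h2 h1

lemma meas_ball_zero (hμ : μ (closedBall (0:ℚ_[p]) 1) = 1) (hp3 : 3 ≤ p) :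
    ∀ j : ℕ, μ (closedBall (0:ℚ_[p]) ((p:ℝ)^j)) = (p:ℝ≥0∞)^j := by
  intro j
  induction j with
  | zero => simpa using hμ
  | succ j ih =>
    have hdisj : Set.Pairwise ↑(Finset.range p) (Function.onFun Disjoint fun i : ℕ =>
        closedBall ((i : ℚ_[p]) * (p:ℚ_[p])^(-(j+1:ℤ))) ((p:ℝ)^j)) := by
      intro i hi i' hi' hne
      simp only [Finset.coe_range, Set.mem_Iio] at hi hi'
      rw [Function.onFun, Set.disjoint_left]
      intro u hu hu'
      rw [Metric.mem_closedBall, dist_eq_norm] at hu hu'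
      -- distance between centers
      have hd : ‖(i : ℚ_[p]) * (p:ℚ_[p])^(-(j+1:ℤ)) - (i' : ℚ_[p]) * (p:ℚ_[p])^(-(j+1:ℤ))‖
          = (p:ℝ)^(j+1:ℤ) := by
        have : (i : ℚ_[p]) * (p:ℚ_[p])^(-(j+1:ℤ)) - (i' : ℚ_[p]) * (p:ℚ_[p])^(-(j+1:ℤ))
            = (((i:ℤ) - (i':ℤ) : ℤ) : ℚ_[p]) * (p:ℚ_[p])^(-(j+1:ℤ)) := by
          push_cast; ring
        rw [this, norm_mul, Padic.norm_p_zpow, neg_neg]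
        have hnd : ¬ ((p:ℤ) ∣ ((i:ℤ) - (i':ℤ))) := by
          intro hdvd
          have h0 : ((i:ℤ) - (i':ℤ)) ≠ 0 := by
            intro h; apply hne; omega
          have hle := Int.le_of_dvd (abs_pos.mpr h0) ((dvd_abs _ _).mpr hdvd)
          have hlt : |(i:ℤ) - (i':ℤ)| < (p:ℤ) := abs_sub_lt_iff.mpr ⟨by omega, by omega⟩
          linarith
        have h1 : ‖(((i:ℤ) - (i':ℤ) : ℤ) : ℚ_[p])‖ = 1 := by
          rcases lt_or_eq_of_le (Padic.norm_int_le_one (p := p) ((i:ℤ) - (i':ℤ))) with h | h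
          · exact absurd (Padic.norm_intCast_lt_one_iff.mp h) hnd
          · exact h
        rw [h1, one_mul]
      -- contradiction via ultrametric
      have : ‖(i : ℚ_[p]) * (p:ℚ_[p])^(-(j+1:ℤ)) - (i' : ℚ_[p]) * (p:ℚ_[p])^(-(j+1:ℤ))‖
          ≤ (p:ℝ)^j := by
        have heq : (i : ℚ_[p]) * (p:ℚ_[p])^(-(j+1:ℤ)) - (i' : ℚ_[p]) * (p:ℚ_[p])^(-(j+1:ℤ))
            = -(u - (i : ℚ_[p]) * (p:ℚ_[p])^(-(j+1:ℤ)))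
              + (u - (i' : ℚ_[p]) * (p:ℚ_[p])^(-(j+1:ℤ))) := by ring
        rw [heq]
        refine le_trans (Padic.nonarchimedean _ _) (max_le ?_ hu')
        rw [norm_neg]; exact hu
      rw [hd] at this
      have hlt : (p:ℝ)^(j:ℤ) < (p:ℝ)^(j+1:ℤ) := by
        apply zpow_lt_zpow_right₀ hp1R; omega
      rw [← zpow_natCast (p:ℝ) j] at this
      linarith
    have hmeas : ∀ i ∈ Finset.range p, MeasurableSet
        (closedBall ((i : ℚ_[p]) * (p:ℚ_[p])^(-(j+1:ℤ))) ((p:ℝ)^j)) :=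
      fun i _ => measurableSet_closedBall
    rw [ball_partition, measure_biUnion_finset hdisj hmeas]
    have : ∀ i ∈ Finset.range p,
        μ (closedBall ((i : ℚ_[p]) * (p:ℚ_[p])^(-(j+1:ℤ))) ((p:ℝ)^j)) = (p:ℝ≥0∞)^j := by
      intro i _
      rw [meas_cB_center, ih]
    rw [Finset.sum_congr rfl this, Finset.sum_const, Finset.card_range]
    simp [pow_succ, mul_comm]
end Meas
end MeasPart

end Stmt3Aux

open Stmt3Aux in
open scoped ENNReal in
open scoped NNReal in
open MeasureTheory in
/-- If `|c| > p` then `μ₂(K⁻) = +∞`, where `μ₂ = μ × μ` and `μ` is the Haar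
measure on `ℚ_p` normalized so that `μ(ℤ_p) = 1`. -/
theorem stmt3 [Fact p.Prime] [MeasurableSpace ℚ_[p]] [BorelSpace ℚ_[p]]
    (hodd : Odd p) (c : ℚ_[p]) (hc : (p : ℝ) < ‖c‖)
    (μ : Measure ℚ_[p]) [μ.IsAddHaarMeasure] [SigmaFinite μ]
    (hμ : μ (Metric.closedBall 0 1) = 1) :
    (μ.prod μ) (KMinus c) = ⊤ := by
  classical
  have hp1 : (1:ℝ) < (p:ℝ) := hp1R
  have hp0 : (0:ℝ) < (p:ℝ) := hp0R
  have hp2 : p ≠ 2 := by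
    rintro rfl
    exact (by decide : ¬ Odd 2) hodd
  have hp3 : 3 ≤ p := by
    have := (Fact.out : p.Prime).two_le
    omega
  have hpQ' : ((p:ℚ_[p])) ≠ 0 := hpQ
  -- c ≠ 0 and its valuation
  have hc0 : c ≠ 0 := by
    intro h
    rw [h, norm_zero] at hc
    linarith
  have hval : ‖c‖ = (p:ℝ)^(-c.valuation) := Padic.norm_eq_zpow_neg_valuation hc0
  have hVpos : 1 < -c.valuation := by
    have h1 : (p:ℝ)^(1:ℤ) < (p:ℝ)^(-c.valuation) := by
      rw [zpow_one, ← hval]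
      exact hc
    exact (zpow_lt_zpow_iff_right₀ hp1).mp h1
  set V : ℕ := (-c.valuation).toNat with hVdef
  have hVZ : (V:ℤ) = -c.valuation := Int.toNat_of_nonneg (by omega)
  have hV2 : 2 ≤ V := by omega
  have hcn : ‖c‖ = (p:ℝ)^(V:ℤ) := by rw [hval, hVZ]
  -- the leading digit of c
  have hw1 : ‖c * (p:ℚ_[p])^((V:ℤ))‖ = 1 := by
    rw [norm_mul, Padic.norm_p_zpow, hcn, Stmt3Aux.ppow_mul]
    rw [show (V:ℤ) + (-(V:ℤ)) = 0 by ring, zpow_zero]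
  set w : ℤ_[p] := ⟨c * (p:ℚ_[p])^((V:ℤ)), le_of_eq hw1⟩ with hwdef
  obtain ⟨n, hn, hmem⟩ := PadicInt.exists_mem_range w
  set γ : ZMod p := (n : ZMod p) with hγdef
  have hγval : γ.val = n := ZMod.val_natCast_of_lt hn
  have hγ0 : γ ≠ 0 := by
    intro h0
    have hn0 : n = 0 := by
      rw [← hγval, h0, ZMod.val_zero]
    rw [hn0] at hmem
    push_cast at hmem
    rw [sub_zero] at hmem
    have := maxideal_norm hmem
    have hwn : ‖w‖ = 1 := by
      rw [← PadicInt.padic_norm_e_of_padicInt w]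
      exact hw1
    rw [hwn] at this
    have : (p:ℝ) ≤ 1 := by
      rw [← one_div, le_div_iff₀ hp0] at this
      linarith
    linarith
  have hγ : ‖c - (γ.val : ℚ_[p]) * (p:ℚ_[p])^(-(V:ℤ))‖ ≤ (p:ℝ)^((V:ℤ)-1) := by
    have hcc : c = ((w : ℚ_[p])) * (p:ℚ_[p])^(-(V:ℤ)) := by
      show c = (c * (p:ℚ_[p])^((V:ℤ))) * (p:ℚ_[p])^(-(V:ℤ))
      rw [mul_assoc, ← zpow_add₀ hpQ', show (V:ℤ) + (-(V:ℤ)) = 0 by ring, zpow_zero, mul_one]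
    have hsub : c - (γ.val : ℚ_[p]) * (p:ℚ_[p])^(-(V:ℤ))
        = (((w - (n : ℤ_[p]) : ℤ_[p])) : ℚ_[p]) * (p:ℚ_[p])^(-(V:ℤ)) := by
      have hkey : (p:ℚ_[p])^((V:ℤ)) * (p:ℚ_[p])^(-(V:ℤ)) = 1 := by
        rw [← zpow_add₀ hpQ', show (V:ℤ) + -(V:ℤ) = 0 by ring, zpow_zero]
      rw [hγval]
      push_cast
      rw [sub_mul, mul_assoc, hkey, mul_one]
    rw [hsub, norm_mul, Padic.norm_p_zpow, neg_neg, PadicInt.padic_norm_e_of_padicInt]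
    calc ‖w - (n : ℤ_[p])‖ * (p:ℝ)^(V:ℤ) ≤ (p:ℝ)⁻¹ * (p:ℝ)^(V:ℤ) :=
          mul_le_mul_of_nonneg_right (maxideal_norm hmem) (le_of_lt (zpow_pos hp0 _))
      _ = (p:ℝ)^((V:ℤ)-1) := by
          rw [← zpow_neg_one, Stmt3Aux.ppow_mul, show (-1) + (V:ℤ) = (V:ℤ)-1 by ring]
  -- choice of e1
  have h2ne : (2 : ZMod p) ≠ 0 := by
    intro h0
    have h2 : ((2:ℕ) : ZMod p) = 0 := by push_cast; exact h0
    have := (ZMod.natCast_eq_zero_iff 2 p).mp h2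
    have := Nat.le_of_dvd (by norm_num) this
    omega
  obtain ⟨e1, he1, hne⟩ : ∃ e1 : ZMod p, e1 ≠ 0 ∧ e1 ≠ γ := by
    by_cases hγ1 : γ = 1
    · refine ⟨2, h2ne, ?_⟩
      rw [hγ1]
      intro h
      apply one_ne_zero (α := ZMod p)
      linear_combination h
    · exact ⟨1, one_ne_zero, fun h => hγ1 h.symm⟩
  -- measures of the cells
  have hCmeas : ∀ k, (μ.prod μ) (Cset c V e1 γ k)
      = ((p:ℝ≥0∞)^(mseq V (k+1) - 1)) * ((p:ℝ≥0∞)^(mseq V k - 1)) := by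
    intro k
    have hg1 := mseq_ge hV2 (k+1)
    have hg0 := mseq_ge hV2 k
    have hr1 : ((p:ℝ)^((mseq V (k+1) : ℤ) - 1)) = (p:ℝ)^((mseq V (k+1) - 1 : ℕ)) := by
      rw [← zpow_natCast]
      congr 1
      omega
    have hr0 : ((p:ℝ)^((mseq V k : ℤ) - 1)) = (p:ℝ)^((mseq V k - 1 : ℕ)) := by
      rw [← zpow_natCast]
      congr 1
      omega
    rw [Cset, Measure.prod_prod]
    rw [meas_cB_center μ (xcen c V e1 γ k) _, meas_cB_center μ (ycen V e1 k) _]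
    rw [hr1, hr0]
    rw [meas_ball_zero μ hμ hp3 (mseq V (k+1) - 1), meas_ball_zero μ hμ hp3 (mseq V k - 1)]
  -- conclusion
  apply ENNReal.eq_top_of_forall_nnreal_le
  intro r
  obtain ⟨n', hn'⟩ := pow_unbounded_of_one_lt r one_lt_two
  have h2p : (2:ℝ≥0∞) ≤ (p:ℝ≥0∞) := by
    have : ((2:ℕ):ℝ≥0∞) ≤ ((p:ℕ):ℝ≥0∞) := by exact_mod_cast Nat.cast_le.mpr (by omega : 2 ≤ p)
    simpa using this
  have h1p : (1:ℝ≥0∞) ≤ (p:ℝ≥0∞) := le_trans (by norm_num) h2p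
  have hexp : n' ≤ mseq V (n'+1) - 1 := by
    have := mseq_ge hV2 (n'+1)
    omega
  calc (r:ℝ≥0∞) ≤ ((2:ℝ≥0)^n' : ℝ≥0) := by exact_mod_cast hn'.le
    _ = (2:ℝ≥0∞)^n' := by push_cast; rfl
    _ ≤ (p:ℝ≥0∞)^n' := pow_le_pow_left' h2p n'
    _ ≤ (p:ℝ≥0∞)^(mseq V (n'+1) - 1) := pow_le_pow_right' h1p hexp
    _ ≤ ((p:ℝ≥0∞)^(mseq V (n'+1) - 1)) * ((p:ℝ≥0∞)^(mseq V n' - 1)) :=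
        le_mul_of_one_le_right' (one_le_pow_of_one_le' h1p _)
    _ = (μ.prod μ) (Cset c V e1 γ n') := (hCmeas n').symm
    _ ≤ (μ.prod μ) (KMinus c) :=
        measure_mono (C_subset_K hV2 hcn hγ he1 hne n')
end

section
/- Assume |c| = 1. Then K⁻ ⊆ {(x,y) ∈ Q : max(|x|, |y|) = 1}. -/
variable {p : ℕ}

/-- Core real-analytic lemma. -/
lemma coreLem (r : ℕ → ℝ) (M : ℝ)
    (hpos : ∀ n, 0 < r (n+1))
    (hgap : ∀ n, r n ≤ 1 ∨ 2 ≤ r n)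
    (hmul : ∀ n, 1 < r n → r (n+1) * r (n+2) = r n)
    (hle : ∀ n, r n ≤ 1 → r (n+1) * r (n+2) ≤ 1)
    (hbdd : ∀ n, r n ≤ M) : ∀ n, r n ≤ 1 := by
  by_contra hcon
  push_neg at hcon
  obtain ⟨N, hN⟩ := hcon
  have hex : ∃ k, r (N + k) ≤ 1 := by
    by_contra hall
    push_neg at hall
    have hgt : ∀ k, 1 < r (N + k) := hall
    have hdesc : ∀ j, r (N + 2*j) ≤ r N / 2 ^ j := by
      intro j
      induction j with
      | zero => simp
      | succ j ih =>
        have h1 : 1 < r (N + 2*j) := hgt (2*j)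
        have h2 : 1 < r (N + 2*j + 1) := by
          have := hgt (2*j + 1); rwa [← add_assoc] at this
        have h2' : 2 ≤ r (N + 2*j + 1) := by
          rcases hgap (N + 2*j + 1) with h | h
          · linarith
          · exact h
        have e := hmul (N + 2*j) h1
        have hp2 : 0 < r (N + 2*j + 2) := hpos (N + 2*j + 1)
        have hkey : 2 * r (N + 2*j + 2) ≤ r (N + 2*j) := by
          calc 2 * r (N + 2*j + 2) ≤ r (N + 2*j + 1) * r (N + 2*j + 2) :=
                mul_le_mul_of_nonneg_right h2' (le_of_lt hp2)
            _ = r (N + 2*j) := e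
        have heq : N + 2*(j+1) = N + 2*j + 2 := by ring
        rw [heq]
        calc r (N + 2*j + 2) ≤ r (N + 2*j) / 2 := by linarith
          _ ≤ (r N / 2 ^ j) / 2 := by linarith
          _ = r N / 2 ^ (j+1) := by ring
    obtain ⟨j, hj⟩ := pow_unbounded_of_one_lt (r N) (by norm_num : (1:ℝ) < 2)
    have h1 := hdesc j
    have h2 := hgt (2*j)
    have hd : r N / 2 ^ j < 1 := by
      rw [div_lt_one (by positivity)]; exact hj
    linarith
  classical
  set k := Nat.find hex with hkdef
  have hk : r (N + k) ≤ 1 := Nat.find_spec hex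
  have hkpos : 0 < k := by
    by_contra h
    have : k = 0 := by omega
    rw [this] at hk; simp at hk; linarith
  set m := N + k - 1 with hm
  have hmk : m + 1 = N + k := by omega
  have hm1 : 1 < r m := by
    rcases Nat.eq_zero_or_pos (k - 1) with h | h
    · have hme : m = N := by omega
      rw [hme]; exact hN
    · have hlt : k - 1 < k := by omega
      have hmin := Nat.find_min hex hlt
      have hmeq : m = N + (k - 1) := by omega
      rw [hmeq]; linarith [lt_of_not_ge hmin]
  have hm2 : r (m + 1) ≤ 1 := by rw [hmk]; exact hk
  -- growth invariant
  have hinv : ∀ j : ℕ, 2 ^ (j+1) ≤ r (m + 2 + 2*j) ∧ r (m + 2 + 2*j) * r (m + 2 + 2*j + 1) ≤ 1 := by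
    intro j
    induction j with
    | zero =>
      constructor
      · have e := hmul m hm1
        have hp1 : 0 < r (m + 1) := hpos m
        have hp2 : 0 < r (m + 2) := hpos (m + 1)
        have : r m ≤ r (m + 2) := by
          calc r m = r (m + 1) * r (m + 2) := e.symm
            _ ≤ 1 * r (m + 2) := mul_le_mul_of_nonneg_right hm2 (le_of_lt hp2)
            _ = r (m + 2) := one_mul _
        have h1 : 1 < r (m + 2) := lt_of_lt_of_le hm1 this
        have := hgap (m + 2)
        rcases this with h | h
        · linarith
        · simpa using h
      · have := hle (m + 1) hm2
        simpa [show m + 1 + 1 = m + 2 from rfl, show m + 1 + 2 = m + 2 + 1 by ring] using this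
    | succ j ih =>
      obtain ⟨h1, h2⟩ := ih
      set t := m + 2 + 2*j with ht
      have h2p : (2:ℝ) ≤ 2 ^ (j+1) := by
        calc (2:ℝ) = 2^1 := (pow_one 2).symm
          _ ≤ 2^(j+1) := pow_le_pow_right₀ (by norm_num) (by omega)
      have hrt : (2:ℝ) ≤ r t := le_trans h2p h1
      have hrt1 : 1 < r t := by linarith
      have hp1 : 0 < r (t + 1) := hpos t
      have hp2 : 0 < r (t + 2) := hpos (t + 1)
      have e := hmul t hrt1
      -- r (t+1) ≤ 1 / r t ≤ 1/2
      have ht1 : r (t + 1) ≤ 1 / r t := by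
        rw [le_div_iff₀ (by linarith : (0:ℝ) < r t)]
        calc r (t + 1) * r t = r t * r (t + 1) := mul_comm _ _
          _ ≤ 1 := h2
      have ht1' : r (t + 1) ≤ 1 := le_trans ht1 (by
        rw [div_le_one (by linarith : (0:ℝ) < r t)]; linarith)
      constructor
      · -- 2^(j+2) ≤ r (t+2)
        have hsq : r t * r t ≤ r (t + 1) * r (t + 2) * r t := by
          rw [e]
        have : r t * r t ≤ r (t + 2) := by
          have h3 : r (t + 1) * r t ≤ 1 := by
            calc r (t + 1) * r t = r t * r (t + 1) := mul_comm _ _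
              _ ≤ 1 := h2
          -- r t = r (t+1) * r (t+2) ⇒ r (t+2) = r t / r (t+1) ≥ r t * r t
          have e2 : r (t + 2) = r t / r (t + 1) := by
            field_simp
            linarith [e]
          rw [e2, le_div_iff₀ hp1]
          calc r t * r t * r (t + 1) = (r t * r (t + 1)) * r t := by ring
            _ ≤ 1 * r t := mul_le_mul_of_nonneg_right h2 (by linarith)
            _ = r t := one_mul _
        have heq : m + 2 + 2*(j+1) = t + 2 := by omega
        rw [heq]
        calc (2:ℝ) ^ (j + 1 + 1) = 2^(j+1) * 2 := by ring
          _ ≤ 2^(j+1) * 2^(j+1) := by nlinarith [h2p]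
          _ ≤ r t * r t := by nlinarith [h1, h2p]
          _ ≤ r (t + 2) := this
      · have := hle (t + 1) ht1'
        have heq : m + 2 + 2*(j+1) = t + 2 := by omega
        rw [heq]
        simpa [show t + 1 + 1 = t + 2 from rfl, show t + 1 + 2 = t + 2 + 1 by ring] using this
  obtain ⟨j, hj⟩ := pow_unbounded_of_one_lt M (by norm_num : (1:ℝ) < 2)
  have h1 := (hinv j).1
  have h2 := hbdd (m + 2 + 2*j)
  have : (2:ℝ)^j ≤ 2^(j+1) := by
    apply pow_le_pow_right₀ (by norm_num); omega
  linarith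


lemma padic_gap [Fact p.Prime] (x : ℚ_[p]) : ‖x‖ ≤ 1 ∨ (p:ℝ) ≤ ‖x‖ := by
  rcases eq_or_ne x 0 with h | h
  · left; simp [h]
  · rcases le_or_gt ‖x‖ 1 with h1 | h1
    · left; exact h1
    · right
      rw [Padic.norm_eq_zpow_neg_valuation h] at h1 ⊢
      have hp1 : (1:ℝ) < (p:ℝ) := by
        exact_mod_cast (Fact.out : p.Prime).one_lt
      have hv : (1:ℤ) ≤ -x.valuation := by
        by_contra hv
        push_neg at hv
        have : -x.valuation ≤ 0 := by omega
        have := zpow_le_one_of_nonpos₀ (le_of_lt hp1) this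
        linarith
      calc (p:ℝ) = (p:ℝ) ^ (1:ℤ) := (zpow_one _).symm
        _ ≤ (p:ℝ) ^ (-x.valuation) := by
            apply zpow_le_zpow_right₀ (le_of_lt hp1) hv


/-- If `|c| = 1` then `K⁻ ⊆ {(x,y) ∈ Q : max(|x|,|y|) = 1}`. -/
theorem stmt4 [Fact p.Prime] (hodd : Odd p) (c : ℚ_[p]) (hc : ‖c‖ = 1) :
    KMinus c ⊆ {z ∈ QSet c | max ‖z.1‖ ‖z.2‖ = 1} := by
  intro z hz
  obtain ⟨hQ, M, hM⟩ := hz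
  set a : ℕ → ℚ_[p] := fun n => ((g c)^[n] z).1 with ha
  have hsnd : ∀ n, ((g c)^[n] z).2 = a (n+1) := by
    intro n
    simp only [ha, Function.iterate_succ_apply', g]
  have hane : ∀ n, a (n+1) ≠ 0 := fun n => (hsnd n) ▸ hQ n
  have key : ∀ n, a (n+1) * a (n+2) = a n - c := by
    intro n
    have h2 : a (n+2) = (a n - c) / a (n+1) := by
      have : ((g c)^[n+1] z).2 = (((g c)^[n] z).1 - c) / ((g c)^[n] z).2 := by
        rw [Function.iterate_succ_apply']; rfl
      rw [hsnd (n+1)] at this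
      rw [this, hsnd n]
    rw [h2, mul_div_cancel₀ _ (hane n)]
  set r : ℕ → ℝ := fun n => ‖a n‖ with hr
  have hpos : ∀ n, 0 < r (n+1) := fun n => norm_pos_iff.mpr (hane n)
  have hgap : ∀ n, r n ≤ 1 ∨ 2 ≤ r n := by
    intro n
    rcases padic_gap (a n) with h | h
    · left; exact h
    · right
      have hp2 : (2:ℝ) ≤ (p:ℝ) := by
        exact_mod_cast (Fact.out : p.Prime).two_le
      exact le_trans hp2 h
  have hnormkey : ∀ n, r (n+1) * r (n+2) = ‖a n - c‖ := by
    intro n; rw [hr]; simp only [← norm_mul, key n]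
  have hmul : ∀ n, 1 < r n → r (n+1) * r (n+2) = r n := by
    intro n hn
    rw [hnormkey n]
    have : ‖a n - c‖ = ‖a n‖ := by
      rw [sub_eq_add_neg, Padic.add_eq_max_of_ne (by
        rw [norm_neg, hc]; exact ne_of_gt hn)]
      rw [norm_neg, hc]
      exact max_eq_left (le_of_lt hn)
    rw [this]
  have hle : ∀ n, r n ≤ 1 → r (n+1) * r (n+2) ≤ 1 := by
    intro n hn
    rw [hnormkey n]
    calc ‖a n - c‖ = ‖a n + (-c)‖ := by rw [sub_eq_add_neg]
      _ ≤ max ‖a n‖ ‖-c‖ := Padic.nonarchimedean _ _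
      _ ≤ 1 := by rw [norm_neg, hc]; exact max_le hn le_rfl
  have hbdd : ∀ n, r n ≤ M := by
    intro n
    calc r n = ‖((g c)^[n] z).1‖ := rfl
      _ ≤ pnorm ((g c)^[n] z) := le_max_left _ _
      _ ≤ M := hM n
  have hone : ∀ n, r n ≤ 1 := coreLem r M hpos hgap hmul hle hbdd
  refine ⟨hQ, ?_⟩
  have h0 : ‖z.1‖ = r 0 := rfl
  have h1 : ‖z.2‖ = r 1 := by
    have := hsnd 0
    simp only [Function.iterate_zero_apply] at this
    rw [this]
  rw [h0, h1]
  have hr0 : r 0 ≤ 1 := hone 0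
  have hr1 : r 1 ≤ 1 := hone 1
  by_contra hne
  have hlt : max (r 0) (r 1) < 1 := lt_of_le_of_ne (max_le hr0 hr1) hne
  have hl0 : r 0 < 1 := lt_of_le_of_lt (le_max_left _ _) hlt
  have hl1 : r 1 < 1 := lt_of_le_of_lt (le_max_right _ _) hlt
  have hsub : ‖a 0 - c‖ = 1 := by
    rw [sub_eq_add_neg, Padic.add_eq_max_of_ne (by
      rw [norm_neg, hc]; exact ne_of_lt hl0)]
    rw [norm_neg, hc]
    exact max_eq_right (le_of_lt hl0)
  have := hnormkey 0
  rw [hsub] at this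
  have hr2 : r 2 ≤ 1 := hone 2
  have hp2 : 0 < r 2 := hpos 1
  nlinarith [hpos 0]
end

section
/- Assume |c| < 1. If (x,y) ∈ P, then ‖gⁿ(x,y)‖ → +∞ as n → +∞ (that is, the norms of the backward iterates of (x,y) tend to infinity). -/
open Filter

variable {p : ℕ}

section stmt7aux

private lemma minconv (M : ℕ → ℤ) (m : ℕ) (a : ℤ)
    (h : ∀ j : ℕ, M (m + j) ≤ a - (j / 2 : ℕ)) :
    Tendsto M atTop atBot := by
  refine tendsto_atBot.2 fun b => ?_
  refine eventually_atTop.2 ⟨m + 2 * (a - b).toNat, fun n hn => ?_⟩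
  have h1 := h (n - m)
  rw [Nat.add_sub_cancel' (le_trans (Nat.le_add_right _ _) hn)] at h1
  refine h1.trans ?_
  have h2 : (a - b).toNat ≤ (n - m) / 2 := by omega
  have h4 : ((a - b).toNat : ℤ) ≤ (((n - m) / 2 : ℕ) : ℤ) := by exact_mod_cast h2
  omega

private lemma coreA (γ : ℤ) (hγ : 1 ≤ γ) (v : ℕ → ℤ)
    (T1 : ∀ n, v n < γ → v (n+1) + v (n+2) = v n)
    (T2 : ∀ n, γ < v n → v (n+1) + v (n+2) = γ)
    (T3 : ∀ n, v n = γ → γ ≤ v (n+1) + v (n+2))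
    (I0 : ¬(v 0 = 0 ∧ v 1 = 0)) (Iγ : ¬(v 0 = γ ∧ v 1 = γ)) :
    Tendsto (fun n => min (v n) (v (n+1))) atTop atBot := by
  have inv0 : ∀ n, ¬(v n = 0 ∧ v (n+1) = 0) := by
    intro n
    induction n with
    | zero => exact I0
    | succ k ih =>
      rintro ⟨h1, h2⟩
      have h1' : v (k+1) = 0 := h1
      have h2' : v (k+2) = 0 := h2
      rcases lt_trichotomy (v k) γ with h | h | h
      · have := T1 k h; exact ih ⟨by omega, h1'⟩
      · have := T3 k h; omega
      · have := T2 k h; omega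
  have invγ : ∀ n, ¬(v n = γ ∧ v (n+1) = γ) := by
    intro n
    induction n with
    | zero => exact Iγ
    | succ k ih =>
      rintro ⟨h1, h2⟩
      have h1' : v (k+1) = γ := h1
      have h2' : v (k+2) = γ := h2
      rcases lt_trichotomy (v k) γ with h | h | h
      · have := T1 k h; omega
      · exact ih ⟨h, h1'⟩
      · have := T2 k h; omega
  have exn : ∃ n, v n < 0 := by
    by_contra hall
    push_neg at hall
    by_cases hz : ∃ n, v n = 0
    · obtain ⟨n, hn⟩ := hz
      have hs : v (n+1) + v (n+2) = v n := T1 n (by omega)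
      have ha := hall (n+1); have hb := hall (n+2)
      have ha' : 0 ≤ v (n+1) := ha
      have hb' : 0 ≤ v (n+2) := hb
      have hbr : v (n+1+1) = v (n+2) := rfl
      exact inv0 (n+1) ⟨by omega, by omega⟩
    · push_neg at hz
      have hone : ∀ n, 1 ≤ v n := fun n => by have := hall n; have := hz n; omega
      have hn0 : ∃ n₀, v n₀ ≠ γ := by
        by_cases h : v 0 = γ
        · exact ⟨1, fun h1 => Iγ ⟨h, h1⟩⟩
        · exact ⟨0, h⟩
      obtain ⟨n₀, hn₀⟩ := hn0
      have hb : v (n₀+1) ≤ γ - 1 ∧ v (n₀+1+1) ≤ γ - 1 := by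
        have hbr : v (n₀+1+1) = v (n₀+2) := rfl
        rcases lt_or_gt_of_ne hn₀ with h | h
        · have hs : v (n₀+1) + v (n₀+2) = v n₀ := T1 n₀ h
          have q1 := hone (n₀+1); have q2 := hone (n₀+2)
          have q1' : 1 ≤ v (n₀+1) := q1
          have q2' : 1 ≤ v (n₀+2) := q2
          constructor <;> omega
        · have hs : v (n₀+1) + v (n₀+2) = γ := T2 n₀ h
          have q1' : 1 ≤ v (n₀+1) := hone (n₀+1)
          have q2' : 1 ≤ v (n₀+2) := hone (n₀+2)
          constructor <;> omega
      have hlt : ∀ k, v (n₀ + 1 + k) ≤ γ - 1 := by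
        intro k
        induction k using Nat.strong_induction_on with
        | _ k ih =>
          match k with
          | 0 => exact hb.1
          | 1 => exact hb.2
          | (j+2) =>
            have e1 : v (n₀+1+j) ≤ γ - 1 := ih j (by omega)
            have hs : v (n₀+1+j+1) + v (n₀+1+j+2) = v (n₀+1+j) := T1 (n₀+1+j) (by omega)
            have q1 : 1 ≤ v (n₀+1+j+1) := hone (n₀+1+j+1)
            show v (n₀+1+j+2) ≤ γ - 1
            omega
      have hdec : ∀ k : ℕ, v (n₀+1+2*k) ≤ γ-1-k := by
        intro k
        induction k with
        | zero =>
          have := hlt 0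
          have h0 : v (n₀+1+2*0) ≤ γ - 1 := this
          show v (n₀+1+2*0) ≤ γ-1-((0:ℕ):ℤ)
          omega
        | succ j ih =>
          have hs : v (n₀+1+2*j+1) + v (n₀+1+2*j+2) = v (n₀+1+2*j) :=
            T1 (n₀+1+2*j) (by have := hlt (2*j); have h' : v (n₀+1+2*j) ≤ γ - 1 := this; omega)
          have q1 : 1 ≤ v (n₀+1+2*j+1) := hone (n₀+1+2*j+1)
          show v (n₀+1+2*j+2) ≤ γ-1-((j+1:ℕ):ℤ)
          omega
      have hA := hdec γ.toNat
      have hB : 1 ≤ v (n₀+1+2*γ.toNat) := hone (n₀+1+2*γ.toNat)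
      omega
  obtain ⟨n1, hn1⟩ := exn
  have exm : ∃ m, v m < 0 ∧ 0 ≤ v (m+1) := by
    by_contra hall
    push_neg at hall
    have hneg : ∀ k, v (n1 + k) < 0 := by
      intro k
      induction k with
      | zero => exact hn1
      | succ j ih => exact hall _ ih
    have hup : ∀ k : ℕ, v n1 + k ≤ v (n1 + 2*k) := by
      intro k
      induction k with
      | zero =>
        have hbr : v (n1+2*0) = v n1 := rfl
        show v n1 + ((0:ℕ):ℤ) ≤ v (n1+2*0)
        omega
      | succ j ih =>
        have hs : v (n1+2*j+1) + v (n1+2*j+2) = v (n1+2*j) :=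
          T1 (n1+2*j) (by have : v (n1+2*j) < 0 := hneg (2*j); omega)
        have h1' : v (n1+2*j+1) < 0 := hneg (2*j+1)
        show v n1 + ((j+1:ℕ):ℤ) ≤ v (n1+2*j+2)
        omega
    have hA := hup (-v n1).toNat
    have hB : v (n1 + 2*(-v n1).toNat) < 0 := hneg (2*(-v n1).toNat)
    omega
  obtain ⟨m0, hm01, hm02⟩ := exm
  have exd2 : ∃ m, v m < 0 ∧ γ - v m ≤ v (m+1) := by
    have key : ∀ m, v m < 0 → γ ≤ v (m+1) → ∃ m', v m' < 0 ∧ γ - v m' ≤ v (m'+1) := by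
      intro m h1 hge
      have hs : v (m+1) + v (m+2) = v m := T1 m (by omega)
      rcases eq_or_lt_of_le hge with he | hl
      · have hs2 : γ ≤ v (m+2) + v (m+2+1) := T3 (m+1) he.symm
        exact ⟨m+2, by omega, by omega⟩
      · have hs2 : v (m+2) + v (m+2+1) = γ := T2 (m+1) hl
        exact ⟨m+2, by omega, by omega⟩
    suffices H : ∀ (k : ℕ) (m : ℕ), v m < 0 → 0 ≤ v (m+1) → γ - v (m+1) ≤ (k:ℤ) →
        ∃ m', v m' < 0 ∧ γ - v m' ≤ v (m'+1) by
      exact H (γ - v (m0+1)).toNat m0 hm01 hm02 (Int.self_le_toNat _)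
    intro k
    induction k with
    | zero =>
      intro m h1 h2 h3
      exact key m h1 (by omega)
    | succ k ihk =>
      intro m h1 h2 h3
      by_cases hge : γ ≤ v (m+1)
      · exact key m h1 hge
      · push_neg at hge
        have hs : v (m+1) + v (m+2) = v m := T1 m (by omega)
        have hs2 : v (m+2) + v (m+2+1) = v (m+1) := T1 (m+1) hge
        refine ihk (m+2) (by omega) (by omega) (by omega)
  obtain ⟨m, hm1, hm2⟩ := exd2
  have inv : ∀ k : ℕ, v (m+2*k) < 0 ∧ γ - v (m+2*k) ≤ v (m+2*k+1) ∧ v (m+2*k) ≤ v m - k := by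
    intro k
    induction k with
    | zero =>
      have hbr : v (m+2*0) = v m := rfl
      refine ⟨hm1, hm2, ?_⟩
      show v (m+2*0) ≤ v m - ((0:ℕ):ℤ)
      omega
    | succ k ih =>
      obtain ⟨h1, h2, h3⟩ := ih
      have ha : v (m+2*k+1) + v (m+2*k+2) = v (m+2*k) := T1 (m+2*k) (by omega)
      have hb : v (m+2*k+2) + v (m+2*k+2+1) = γ := T2 (m+2*k+1) (by omega)
      refine ⟨?_, ?_, ?_⟩
      · show v (m+2*k+2) < 0; omega
      · show γ - v (m+2*k+2) ≤ v (m+2*k+2+1); omega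
      · show v (m+2*k+2) ≤ v m - ((k+1:ℕ):ℤ); omega
  have hbound : ∀ j : ℕ, min (v (m+j)) (v (m+j+1)) ≤ v m - ((j/2 : ℕ) : ℤ) := by
    intro j
    rcases Nat.even_or_odd j with ⟨k, hk⟩ | ⟨k, hk⟩
    · have h := (inv k).2.2
      have e : m + j = m + 2*k := by omega
      have hj : (j/2 : ℕ) = k := by omega
      rw [e, hj]
      exact le_trans (min_le_left _ _) h
    · have h := (inv (k+1)).2.2
      have e : m + j + 1 = m + 2*(k+1) := by omega
      have hj : (j/2 : ℕ) = k := by omega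
      rw [e, hj]
      refine le_trans (min_le_right _ _) (h.trans ?_)
      push_cast
      omega
  exact minconv _ m (v m) hbound


private lemma minconv' (M : ℕ → ℤ) (m : ℕ) (a : ℤ)
    (h : ∀ j : ℕ, M (m + j) ≤ a - (j / 2 : ℕ)) :
    Tendsto M atTop atBot := by
  refine tendsto_atBot.2 fun b => ?_
  refine eventually_atTop.2 ⟨m + 2 * (a - b).toNat, fun n hn => ?_⟩
  have h1 := h (n - m)
  rw [Nat.add_sub_cancel' (le_trans (Nat.le_add_right _ _) hn)] at h1
  refine h1.trans ?_
  have h2 : (a - b).toNat ≤ (n - m) / 2 := by omega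
  have h4 : ((a - b).toNat : ℤ) ≤ (((n - m) / 2 : ℕ) : ℤ) := by exact_mod_cast h2
  omega

private lemma coreB (v : ℕ → ℤ)
    (T : ∀ n, v (n+1) + v (n+2) = v n)
    (h0 : 1 ≤ v 0) (h1 : 1 ≤ v 1) :
    Tendsto (fun n => min (v n) (v (n+1))) atTop atBot := by
  have inv0 : ∀ n, ¬(v n = 0 ∧ v (n+1) = 0) := by
    intro n
    induction n with
    | zero => omega
    | succ k ih =>
      rintro ⟨a, b⟩
      have a' : v (k+1) = 0 := a
      have b' : v (k+2) = 0 := b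
      have := T k
      exact ih ⟨by omega, a'⟩
  have exn : ∃ n, v n < 0 := by
    by_contra hall
    push_neg at hall
    by_cases hz : ∃ n, v n = 0
    · obtain ⟨n, hn⟩ := hz
      have hs := T n
      have ha : 0 ≤ v (n+1) := hall (n+1)
      have hb : 0 ≤ v (n+2) := hall (n+2)
      have hbr : v (n+1+1) = v (n+2) := rfl
      exact inv0 (n+1) ⟨by omega, by omega⟩
    · push_neg at hz
      have hone : ∀ n, 1 ≤ v n := fun n => by have := hall n; have := hz n; omega
      have hdec : ∀ k : ℕ, v (2*k) ≤ v 0 - k := by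
        intro k
        induction k with
        | zero =>
          have hbr : v (2*0) = v 0 := rfl
          show v (2*0) ≤ v 0 - ((0:ℕ):ℤ)
          omega
        | succ j ih =>
          have hs : v (2*j+1) + v (2*j+2) = v (2*j) := T (2*j)
          have q1 : 1 ≤ v (2*j+1) := hone (2*j+1)
          show v (2*j+2) ≤ v 0 - ((j+1:ℕ):ℤ)
          omega
      have hA := hdec (v 0).toNat
      have hB : 1 ≤ v (2*(v 0).toNat) := hone (2*(v 0).toNat)
      omega
  obtain ⟨n1, hn1⟩ := exn
  have exm : ∃ m, v m < 0 ∧ 0 ≤ v (m+1) := by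
    by_contra hall
    push_neg at hall
    have hneg : ∀ k, v (n1 + k) < 0 := by
      intro k
      induction k with
      | zero => exact hn1
      | succ j ih => exact hall _ ih
    have hup : ∀ k : ℕ, v n1 + k ≤ v (n1 + 2*k) := by
      intro k
      induction k with
      | zero =>
        have hbr : v (n1+2*0) = v n1 := rfl
        show v n1 + ((0:ℕ):ℤ) ≤ v (n1+2*0)
        omega
      | succ j ih =>
        have hs : v (n1+2*j+1) + v (n1+2*j+2) = v (n1+2*j) := T (n1+2*j)
        have h1' : v (n1+2*j+1) < 0 := hneg (2*j+1)
        show v n1 + ((j+1:ℕ):ℤ) ≤ v (n1+2*j+2)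
        omega
    have hA := hup (-v n1).toNat
    have hB : v (n1 + 2*(-v n1).toNat) < 0 := hneg (2*(-v n1).toNat)
    omega
  obtain ⟨m, hm1, hm2⟩ := exm
  have inv : ∀ k : ℕ, v (m+2*k) < 0 ∧ 0 ≤ v (m+2*k+1) ∧ (k:ℤ) ≤ v (m+2*k+1) ∧
      v (m+2*k) ≤ v m - k + 1 ∧ v (m+2*k) ≤ v m := by
    intro k
    induction k with
    | zero =>
      have hbr : v (m+2*0) = v m := rfl
      have hbr2 : v (m+2*0+1) = v (m+1) := rfl
      refine ⟨?_, ?_, ?_, ?_, ?_⟩ <;> omega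
    | succ k ih =>
      obtain ⟨h1, h2, h3, h4, h5⟩ := ih
      have ha : v (m+2*k+1) + v (m+2*k+2) = v (m+2*k) := T (m+2*k)
      have hb : v (m+2*k+2) + v (m+2*k+2+1) = v (m+2*k+1) := T (m+2*k+1)
      refine ⟨?_, ?_, ?_, ?_, ?_⟩
      · show v (m+2*k+2) < 0; omega
      · show (0:ℤ) ≤ v (m+2*k+2+1); omega
      · show ((k+1:ℕ):ℤ) ≤ v (m+2*k+2+1); omega
      · show v (m+2*k+2) ≤ v m - ((k+1:ℕ):ℤ) + 1; omega
      · show v (m+2*k+2) ≤ v m; omega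
  have hbound : ∀ j : ℕ, min (v (m+j)) (v (m+j+1)) ≤ (v m + 1) - ((j/2 : ℕ) : ℤ) := by
    intro j
    rcases Nat.even_or_odd j with ⟨k, hk⟩ | ⟨k, hk⟩
    · have h := (inv k).2.2.2.1
      have e : m + j = m + 2*k := by omega
      have hj : (j/2 : ℕ) = k := by omega
      rw [e, hj]
      exact le_trans (min_le_left _ _) (by omega)
    · have h := (inv (k+1)).2.2.2.1
      have e : m + j + 1 = m + 2*(k+1) := by omega
      have hj : (j/2 : ℕ) = k := by omega
      rw [e, hj]
      refine le_trans (min_le_right _ _) (h.trans ?_)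
      push_cast
      omega
  exact minconv' _ m (v m + 1) hbound


variable [hp : Fact p.Prime]


private lemma oneltp : (1:ℝ) < (p:ℝ) := by exact_mod_cast hp.out.one_lt

private lemma val_le_val' {x y : ℚ_[p]} (hx : x ≠ 0) (hy : y ≠ 0) (h : ‖x‖ ≤ ‖y‖) :
    y.valuation ≤ x.valuation := by
  rw [Padic.norm_eq_zpow_neg_valuation hx, Padic.norm_eq_zpow_neg_valuation hy,
    zpow_le_zpow_iff_right₀ oneltp] at h
  omega

private lemma norm_lt_norm' {x y : ℚ_[p]} (hx : x ≠ 0) (hy : y ≠ 0)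
    (h : y.valuation < x.valuation) : ‖x‖ < ‖y‖ := by
  rw [Padic.norm_eq_zpow_neg_valuation hx, Padic.norm_eq_zpow_neg_valuation hy,
    zpow_lt_zpow_iff_right₀ oneltp]
  omega

private lemma norm_eq_norm' {x y : ℚ_[p]} (hx : x ≠ 0) (hy : y ≠ 0)
    (h : x.valuation = y.valuation) : ‖x‖ = ‖y‖ := by
  rw [Padic.norm_eq_zpow_neg_valuation hx, Padic.norm_eq_zpow_neg_valuation hy, h]

private lemma val_eq_val' {x y : ℚ_[p]} (hx : x ≠ 0) (hy : y ≠ 0) (h : ‖x‖ = ‖y‖) :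
    x.valuation = y.valuation := by
  rw [Padic.norm_eq_zpow_neg_valuation hx, Padic.norm_eq_zpow_neg_valuation hy,
    zpow_right_inj₀ (by exact_mod_cast hp.out.pos) (ne_of_gt (oneltp (p:=p)))] at h
  omega

private lemma one_le_val' {x : ℚ_[p]} (hx : x ≠ 0) (h : ‖x‖ < 1) : 1 ≤ x.valuation := by
  rw [Padic.norm_eq_zpow_neg_valuation hx, show (1:ℝ) = (p:ℝ)^(0:ℤ) from (zpow_zero _).symm,
    zpow_lt_zpow_iff_right₀ oneltp] at h
  omega

private lemma val_sub_eq_of_lt' {x c : ℚ_[p]} (hx : x ≠ 0) (hc : c ≠ 0)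
    (h : x.valuation < c.valuation) : (x - c).valuation = x.valuation := by
  have hlt : ‖c‖ < ‖x‖ := norm_lt_norm' hc hx h
  have hne : ‖x‖ ≠ ‖-c‖ := by rw [norm_neg]; exact hlt.ne'
  have hnrm : ‖x - c‖ = ‖x‖ := by
    rw [sub_eq_add_neg, Padic.add_eq_max_of_ne hne, norm_neg]
    exact max_eq_left hlt.le
  have hxc : x - c ≠ 0 := by
    intro h0
    rw [h0, norm_zero] at hnrm
    exact hx (norm_eq_zero.mp hnrm.symm)
  exact val_eq_val' hxc hx hnrm

private lemma val_sub_eq_of_gt' {x c : ℚ_[p]} (hx : x ≠ 0) (hc : c ≠ 0)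
    (h : c.valuation < x.valuation) : (x - c).valuation = c.valuation := by
  have hlt : ‖x‖ < ‖c‖ := norm_lt_norm' hx hc h
  have hne : ‖x‖ ≠ ‖-c‖ := by rw [norm_neg]; exact hlt.ne
  have hnrm : ‖x - c‖ = ‖c‖ := by
    rw [sub_eq_add_neg, Padic.add_eq_max_of_ne hne, norm_neg]
    exact max_eq_right hlt.le
  have hxc : x - c ≠ 0 := by
    intro h0
    rw [h0, norm_zero] at hnrm
    exact hc (norm_eq_zero.mp hnrm.symm)
  exact val_eq_val' hxc hc hnrm

private lemma val_sub_ge_of_eq' {x c : ℚ_[p]} (hx : x ≠ 0) (hc : c ≠ 0) (hxc : x - c ≠ 0)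
    (h : x.valuation = c.valuation) : c.valuation ≤ (x - c).valuation := by
  have hnrm : ‖x - c‖ ≤ ‖c‖ := by
    have := Padic.nonarchimedean x (-c)
    rw [← sub_eq_add_neg, norm_neg] at this
    refine this.trans ?_
    rw [norm_eq_norm' hx hc h, max_self]
  exact val_le_val' hxc hc hnrm

private lemma val_neg' {x : ℚ_[p]} (hx : x ≠ 0) : (-x).valuation = x.valuation :=
  val_eq_val' (neg_ne_zero.mpr hx) hx (norm_neg x)

private lemma zpow_tendsto' : Tendsto (fun k : ℤ => (p:ℝ) ^ k) atTop atTop := by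
  refine tendsto_atTop.2 fun C => ?_
  obtain ⟨n, hn⟩ := pow_unbounded_of_one_lt C (oneltp (p:=p))
  refine eventually_atTop.2 ⟨n, fun k hk => ?_⟩
  calc C ≤ (p:ℝ)^(n:ℤ) := by rw [zpow_natCast]; exact hn.le
  _ ≤ (p:ℝ)^k := zpow_le_zpow_right₀ oneltp.le hk

end stmt7aux

/-- If `|c| < 1` and `(x,y) ∈ P`, then `‖gⁿ(x,y)‖ → +∞`. -/
theorem stmt7 [Fact p.Prime] (hodd : Odd p) (c : ℚ_[p]) (hc : ‖c‖ < 1)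
    (R : Set (ℚ_[p] × ℚ_[p])) (hR : R = {z ∈ QSet c | ‖z.1‖ = ‖c‖ ∧ ‖z.2‖ = ‖c‖})
    (P : Set (ℚ_[p] × ℚ_[p])) (hP : P = {z ∈ QSet c | ‖z.1‖ < 1 ∧ ‖z.2‖ < 1} \ R) :
    ∀ z ∈ P,
      Filter.Tendsto (fun n : ℕ => pnorm ((g c)^[n] z)) Filter.atTop Filter.atTop := by
  subst hR hP
  rintro z ⟨⟨hzQ, hx1, hy1⟩, hzR⟩
  set u : ℕ → ℚ_[p] := fun n => Nat.casesOn n z.1 (fun k => ((g c)^[k] z).2) with hu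
  have hQ : ∀ n : ℕ, u (n+1) ≠ 0 := fun n => hzQ n
  have hiter : ∀ n, (g c)^[n] z = (u n, u (n+1)) := by
    intro n
    cases n with
    | zero => rfl
    | succ k =>
      have h1 : ((g c)^[k+1] z).1 = u (k+1) := by
        rw [Function.iterate_succ_apply']
        rfl
      exact Prod.ext h1 rfl
  have hrec : ∀ n, u (n+1) * u (n+2) = u n - c := by
    intro n
    have h2 : u (n+2) = (u n - c) / u (n+1) := by
      show ((g c)^[n+1] z).2 = _
      rw [Function.iterate_succ_apply', hiter n]
      rfl
    rw [h2]
    exact mul_div_cancel₀ _ (hQ n)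
  have hsubne : ∀ n, u n - c ≠ 0 := fun n => by
    rw [← hrec n]; exact mul_ne_zero (hQ n) (hQ (n+1))
  have hfinish : ∀ n₀ : ℕ, (∀ n, u (n + n₀) ≠ 0) →
      Tendsto (fun n => min ((u (n+n₀)).valuation) ((u (n+n₀+1)).valuation)) atTop atBot →
      Tendsto (fun n : ℕ => pnorm ((g c)^[n] z)) atTop atTop := by
    intro n₀ hne htd
    rw [← Filter.tendsto_add_atTop_iff_nat n₀]
    have hmono : Monotone fun t : ℤ => (p:ℝ) ^ t :=
      fun a b hab => zpow_le_zpow_right₀ (oneltp (p:=p)).le hab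
    have hmax : ∀ n : ℕ, pnorm ((g c)^[n+n₀] z)
        = (p:ℝ) ^ (-(min ((u (n+n₀)).valuation) ((u (n+n₀+1)).valuation))) := by
      intro n
      have hne2 : u (n+n₀+1) ≠ 0 := by
        have := hne (n+1)
        rwa [show n+1+n₀ = n+n₀+1 by omega] at this
      rw [hiter (n+n₀)]
      show max ‖u (n+n₀)‖ ‖u (n+n₀+1)‖ = _
      rw [Padic.norm_eq_zpow_neg_valuation (hne n), Padic.norm_eq_zpow_neg_valuation hne2,
        show -(min ((u (n+n₀)).valuation) ((u (n+n₀+1)).valuation))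
            = max (-(u (n+n₀)).valuation) (-(u (n+n₀+1)).valuation) by omega,
        hmono.map_max]
    exact Tendsto.congr (fun n => (hmax n).symm)
      (zpow_tendsto'.comp (tendsto_neg_atBot_atTop.comp htd))
  by_cases hc0 : c = 0
  · have hz1 : z.1 ≠ 0 := by
      have := hsubne 0
      rw [hc0, sub_zero] at this
      exact this
    have hne : ∀ n : ℕ, u (n + 0) ≠ 0 := by
      intro n
      cases n with
      | zero => exact hz1
      | succ k => exact hQ k
    have hv : ∀ n, (u (n+1)).valuation + (u (n+2)).valuation = (u n).valuation := by
      intro n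
      rw [← Padic.valuation_mul (hQ n) (hQ (n+1)), hrec n, hc0, sub_zero]
    have h0 : 1 ≤ (u 0).valuation := one_le_val' hz1 hx1
    have h1 : 1 ≤ (u 1).valuation := one_le_val' (hQ 0) hy1
    refine hfinish 0 hne ?_
    have := coreB (fun n => (u n).valuation) hv h0 h1
    simpa using this
  · have hγ : 1 ≤ c.valuation := one_le_val' hc0 hc
    have TT : ∀ n, u n ≠ 0 →
        ((u n).valuation < c.valuation →
          (u (n+1)).valuation + (u (n+2)).valuation = (u n).valuation) ∧
        (c.valuation < (u n).valuation →
          (u (n+1)).valuation + (u (n+2)).valuation = c.valuation) ∧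
        ((u n).valuation = c.valuation →
          c.valuation ≤ (u (n+1)).valuation + (u (n+2)).valuation) := by
      intro n hn
      have hmul : (u (n+1)).valuation + (u (n+2)).valuation = (u n - c).valuation := by
        rw [← Padic.valuation_mul (hQ n) (hQ (n+1)), hrec n]
      refine ⟨fun h => ?_, fun h => ?_, fun h => ?_⟩
      · rw [hmul, val_sub_eq_of_lt' hn hc0 h]
      · rw [hmul, val_sub_eq_of_gt' hn hc0 h]
      · rw [hmul]; exact val_sub_ge_of_eq' hn hc0 (hsubne n) h
    by_cases hz1 : z.1 = 0
    · have hIγ : ¬((u 1).valuation = c.valuation ∧ (u 2).valuation = c.valuation) := by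
        rintro ⟨ha, hb⟩
        have h2 : u 1 * u 2 = -c := by
          have := hrec 0
          rw [show u 0 = z.1 from rfl, hz1, zero_sub] at this
          exact this
        have hm : (u 1 * u 2).valuation = (u 1).valuation + (u 2).valuation :=
          Padic.valuation_mul (hQ 0) (hQ 1)
        rw [h2, val_neg' hc0] at hm
        omega
      have h0 : 1 ≤ (u 1).valuation := one_le_val' (hQ 0) hy1
      have hI0 : ¬((u 1).valuation = 0 ∧ (u 2).valuation = 0) := by
        rintro ⟨a, b⟩; omega
      refine hfinish 1 (fun n => hQ n) ?_
      exact coreA c.valuation hγ (fun n => (u (n+1)).valuation)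
        (fun n h => (TT (n+1) (hQ n)).1 h)
        (fun n h => (TT (n+1) (hQ n)).2.1 h)
        (fun n h => (TT (n+1) (hQ n)).2.2 h)
        hI0 hIγ
    · have hneA : ∀ n : ℕ, u n ≠ 0 := by
        intro n
        cases n with
        | zero => exact hz1
        | succ k => exact hQ k
      have hI0 : ¬((u 0).valuation = 0 ∧ (u 1).valuation = 0) := by
        have h0 : 1 ≤ (u 0).valuation := one_le_val' hz1 hx1
        rintro ⟨a, b⟩; omega
      have hIγ : ¬((u 0).valuation = c.valuation ∧ (u 1).valuation = c.valuation) := by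
        rintro ⟨ha, hb⟩
        refine hzR ⟨hzQ, ?_, ?_⟩
        · exact norm_eq_norm' hz1 hc0 ha
        · exact norm_eq_norm' (hQ 0) hc0 hb
      refine hfinish 0 (fun n => hneA (n+0)) ?_
      have := coreA c.valuation hγ (fun n => (u n).valuation)
        (fun n h => (TT n (hneA n)).1 h)
        (fun n h => (TT n (hneA n)).2.1 h)
        (fun n h => (TT n (hneA n)).2.2 h)
        hI0 hIγ
      simpa using this
end

section
/- Assume |c| > 1. Then g(J₀) ⊆ J₀ (the backward image of J₀ under f lies in J₀), and consequently J₀ ⊆ K⁻. -/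
variable {p : ℕ}

lemma g_mem_J0 [Fact p.Prime] (c : ℚ_[p]) (hc : 1 < ‖c‖) (z : ℚ_[p] × ℚ_[p])
    (hz : z ∈ {z ∈ QSet c | ‖z.1‖ < ‖c‖ ∧ 1 < ‖z.2‖ ∧ ‖z.2‖ < ‖c‖}) :
    g c z ∈ {z ∈ QSet c | ‖z.1‖ < ‖c‖ ∧ 1 < ‖z.2‖ ∧ ‖z.2‖ < ‖c‖} := by
  obtain ⟨hQ, hx, hy1, hy2⟩ := hz
  have hyne : z.2 ≠ 0 := by
    intro h
    rw [h, norm_zero] at hy1; linarith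
  have hypos : (0:ℝ) < ‖z.2‖ := norm_pos_iff.mpr hyne
  have hcpos : (0:ℝ) < ‖c‖ := by linarith
  have hsub : ‖z.1 - c‖ = ‖c‖ := by
    rw [sub_eq_add_neg, Padic.add_eq_max_of_ne (by
      rw [norm_neg]; exact ne_of_lt hx), norm_neg]
    exact max_eq_right (le_of_lt hx)
  have hdiv : ‖(z.1 - c) / z.2‖ = ‖c‖ / ‖z.2‖ := by rw [norm_div, hsub]
  refine ⟨?_, ?_, ?_, ?_⟩
  · intro n
    rw [← Function.iterate_succ_apply]
    exact hQ (n + 1)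
  · exact hy2
  · show (1:ℝ) < ‖(z.1 - c) / z.2‖
    rw [hdiv]
    exact (one_lt_div hypos).mpr hy2
  · show ‖(z.1 - c) / z.2‖ < ‖c‖
    rw [hdiv]
    rw [div_lt_iff₀ hypos]
    nlinarith

/-- If `|c| > 1` then `g(J₀) ⊆ J₀` and `J₀ ⊆ K⁻`. -/
theorem stmt8 [Fact p.Prime] (hodd : Odd p) (c : ℚ_[p]) (hc : 1 < ‖c‖)
    (J0 : Set (ℚ_[p] × ℚ_[p]))
    (hJ0 : J0 = {z ∈ QSet c | ‖z.1‖ < ‖c‖ ∧ 1 < ‖z.2‖ ∧ ‖z.2‖ < ‖c‖}) :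
    g c '' J0 ⊆ J0 ∧ J0 ⊆ KMinus c := by
  subst hJ0
  constructor
  · rintro w ⟨z, hz, rfl⟩
    exact g_mem_J0 c hc z hz
  · intro z hz
    have hiter : ∀ n : ℕ, (g c)^[n] z ∈
        {z ∈ QSet c | ‖z.1‖ < ‖c‖ ∧ 1 < ‖z.2‖ ∧ ‖z.2‖ < ‖c‖} := by
      intro n
      induction n with
      | zero => exact hz
      | succ n ih =>
        rw [Function.iterate_succ_apply']
        exact g_mem_J0 c hc _ ih
    refine ⟨hz.1, ‖c‖, fun n => ?_⟩
    obtain ⟨_, h1, _, h2⟩ := hiter n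
    exact max_le (le_of_lt h1) (le_of_lt h2)
end

section
/- Assume |c| > 1. Then J₁ = {(x,y) ∈ Q : |c| < |x| < |c|² and |c|^{-1}|x| < |y| < |c|}, and for every n ≥ 1, J_{2n+1} = B_{2n} ∪ B_{2n+1}, where B_{2n} = {(x,y) ∈ Q : |c|^{F_{2n}} < |x| ≤ |c|^{F_{2n+1}}, |c|^{-1}|x|^{F_{2n}} < |y|^{F_{2n+1}}, and |y|^{F_{2n-1}} < |c|^{-1}|x|^{F_{2n-2}}} and B_{2n+1} = {(x,y) ∈ Q : |c|^{F_{2n+1}} < |x| < |c|^{F_{2n+2}}, |c|^{-1}|x|^{F_{2n}} < |y|^{F_{2n+1}}, and |y|^{F_{2n}} < |c||x|^{F_{2n-1}}}. -/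
variable {p : ℕ}

/-- `J₁ = {(x,y) ∈ Q : |x| > |c|, |y| < |c|, |y| < |x| < |c||y|}`. -/
def J1 [Fact p.Prime] (c : ℚ_[p]) : Set (ℚ_[p] × ℚ_[p]) :=
  {z ∈ QSet c | ‖c‖ < ‖z.1‖ ∧ ‖z.2‖ < ‖c‖ ∧ ‖z.2‖ < ‖z.1‖ ∧ ‖z.1‖ < ‖c‖ * ‖z.2‖}

/-- `J_{2n+1}`, for `n ≥ 1`. -/
def Jodd [Fact p.Prime] (c : ℚ_[p]) (n : ℕ) : Set (ℚ_[p] × ℚ_[p]) :=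
  {z ∈ QSet c | ‖c‖ * ‖z.2‖ ^ Fb (2*n-1) < ‖z.1‖ ^ Fb (2*n-2) ∧
    ‖z.2‖ ^ Fb (2*n) < ‖c‖ * ‖z.1‖ ^ Fb (2*n-1) ∧
    ‖z.2‖ ^ Fb (2*n+1) < ‖z.1‖ ^ Fb (2*n) ∧
    ‖z.1‖ ^ Fb (2*n) < ‖c‖ * ‖z.2‖ ^ Fb (2*n+1)}

/-- `B_{2n}`, for `n ≥ 1`. -/
def B2n [Fact p.Prime] (c : ℚ_[p]) (n : ℕ) : Set (ℚ_[p] × ℚ_[p]) :=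
  {z ∈ QSet c | ‖c‖ ^ Fb (2*n) < ‖z.1‖ ∧ ‖z.1‖ ≤ ‖c‖ ^ Fb (2*n+1) ∧
    ‖c‖⁻¹ * ‖z.1‖ ^ Fb (2*n) < ‖z.2‖ ^ Fb (2*n+1) ∧
    ‖z.2‖ ^ Fb (2*n-1) < ‖c‖⁻¹ * ‖z.1‖ ^ Fb (2*n-2)}

/-- `B_{2n+1}`, for `n ≥ 1`. -/
def B2n1 [Fact p.Prime] (c : ℚ_[p]) (n : ℕ) : Set (ℚ_[p] × ℚ_[p]) :=
  {z ∈ QSet c | ‖c‖ ^ Fb (2*n+1) < ‖z.1‖ ∧ ‖z.1‖ < ‖c‖ ^ Fb (2*n+2) ∧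
    ‖c‖⁻¹ * ‖z.1‖ ^ Fb (2*n) < ‖z.2‖ ^ Fb (2*n+1) ∧
    ‖z.2‖ ^ Fb (2*n) < ‖c‖ * ‖z.1‖ ^ Fb (2*n-1)}

section Aux

private lemma fb_pos' (k : ℕ) : 1 ≤ Fb k := Nat.fib_pos.2 (Nat.succ_pos k)

private lemma fb_rec' (k : ℕ) : Fb (k+2) = Fb k + Fb (k+1) := by simp [Fb, Nat.fib_add_two]

private lemma fbcas' (m : ℕ) : Fb (2*m) * Fb (2*m+2) = Fb (2*m+1)^2 + 1 := by
  induction m with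
  | zero => simp [Fb]; rfl
  | succ n ih =>
    have h1 : 2*(n+1) = 2*n+2 := by ring
    rw [h1]
    have r1 := fb_rec' (2*n)
    have r2 := fb_rec' (2*n+1)
    have r3 := fb_rec' (2*n+2)
    rw [show 2*n+1+2 = 2*n+3 from rfl] at r2
    rw [show 2*n+2+2 = 2*n+4 from rfl] at r3
    rw [show 2*n+2+1 = 2*n+3 from rfl, show 2*n+2+2 = 2*n+4 from rfl]
    nlinarith [ih, r1, r2, r3]

private lemma keylem' (A B L e₁ e₂ e₃ e₄ e₅ : ℝ)
    (hL : 0 < L) (h1 : 1 ≤ e₁) (h2 : 1 ≤ e₂)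
    (h3 : e₃ = e₁ + e₂) (h4 : e₄ = e₂ + e₃) (h5 : e₅ = e₃ + e₄)
    (hcas : e₁ * e₃ = e₂^2 + 1) :
    ((L + e₂*B < e₁*A ∧ e₃*B < L + e₂*A ∧ e₄*B < e₃*A ∧ e₃*A < L + e₄*B) ↔
      ((e₃*L < A ∧ A ≤ e₄*L ∧ e₃*A < L + e₄*B ∧ L + e₂*B < e₁*A) ∨
       (e₄*L < A ∧ A < e₅*L ∧ e₃*A < L + e₄*B ∧ e₃*B < L + e₂*A))) := by
  have he2 : 0 < e₂ := by linarith
  have he3 : 0 < e₃ := by linarith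
  have he4 : 0 < e₄ := by linarith
  have hi14 : e₁ * e₄ = e₂ * e₃ + 1 := by linear_combination e₁*h4 + hcas - e₂*h3
  have hi33 : e₃ * e₃ = e₂ * e₄ + 1 := by linear_combination e₃*h3 + hcas - e₂*h4
  constructor
  · rintro ⟨P1, P2, P3, P4⟩
    have hA1 : e₃*L < A := by
      have a1 : e₄*(L + e₂*B) < e₄*(e₁*A) := by exact mul_lt_mul_of_pos_left P1 he4
      have a2 : e₂*(e₃*A) < e₂*(L + e₄*B) := by exact mul_lt_mul_of_pos_left P4 he2
      have a3 : e₄*(e₁*A) = e₂*(e₃*A) + A := by linear_combination A * hi14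
      have a4 : e₄*L = e₂*L + e₃*L := by linear_combination L * h4
      linarith
    by_cases hc4 : A ≤ e₄*L
    · exact Or.inl ⟨hA1, hc4, P4, P1⟩
    · push_neg at hc4
      refine Or.inr ⟨hc4, ?_, P4, P2⟩
      have a1 : e₃*(e₃*A) < e₃*(L + e₄*B) := mul_lt_mul_of_pos_left P4 he3
      have a2 : e₄*(e₃*B) < e₄*(L + e₂*A) := mul_lt_mul_of_pos_left P2 he4
      have a3 : e₃*(e₃*A) = e₂*e₄*A + A := by linear_combination A * hi33
      have a4 : e₅*L = e₃*L + e₄*L := by linear_combination L * h5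
      linarith
  · rintro (⟨hA1, hA2, P4, P1⟩ | ⟨hA1, hA2, P4, P2⟩)
    · refine ⟨P1, ?_, ?_, P4⟩
      · have a1 : e₃*(L + e₂*B) < e₃*(e₁*A) := mul_lt_mul_of_pos_left P1 he3
        have a3 : e₃*(e₁*A) = e₂^2*A + A := by linear_combination A * hcas
        have a4 : e₄*L = e₂*L + e₃*L := by linear_combination L * h4
        have h' : e₂*(e₃*B) < e₂*(L + e₂*A) := by nlinarith [a1, a3, hA2, a4]
        exact (mul_lt_mul_iff_right₀ he2).1 h'
      · have a1 : e₄*(L + e₂*B) < e₄*(e₁*A) := mul_lt_mul_of_pos_left P1 he4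
        have a3 : e₄*(e₁*A) = e₂*e₃*A + A := by linear_combination A * hi14
        have h' : e₂*(e₄*B) < e₂*(e₃*A) := by nlinarith [a1, a3, hA2]
        exact (mul_lt_mul_iff_right₀ he2).1 h'
    · refine ⟨?_, P2, ?_, P4⟩
      · have a1 : e₂*(e₃*B) < e₂*(L + e₂*A) := mul_lt_mul_of_pos_left P2 he2
        have a3 : e₂*(e₂*A) = e₁*e₃*A - A := by linear_combination -A * hcas
        have a4 : e₄*L = e₂*L + e₃*L := by linear_combination L * h4
        have h' : e₃*(L + e₂*B) < e₃*(e₁*A) := by nlinarith [a1, a3, hA1, a4]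
        exact (mul_lt_mul_iff_right₀ he3).1 h'
      · have a1 : e₄*(e₃*B) < e₄*(L + e₂*A) := mul_lt_mul_of_pos_left P2 he4
        have a3 : e₂*e₄*A + A = e₃*(e₃*A) := by linear_combination -A * hi33
        have h' : e₃*(e₄*B) < e₃*(e₃*A) := by nlinarith [a1, a3, hA1]
        exact (mul_lt_mul_iff_right₀ he3).1 h'

private lemma bridge_core' (C a b : ℝ) (hC : 1 < C) (ha : 0 < a) (hb : 0 < b) (m : ℕ) :
    (C * b ^ Fb (2*m+1) < a ^ Fb (2*m) ∧ b ^ Fb (2*m+2) < C * a ^ Fb (2*m+1) ∧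
      b ^ Fb (2*m+3) < a ^ Fb (2*m+2) ∧ a ^ Fb (2*m+2) < C * b ^ Fb (2*m+3)) ↔
    ((C ^ Fb (2*m+2) < a ∧ a ≤ C ^ Fb (2*m+3) ∧ C⁻¹ * a ^ Fb (2*m+2) < b ^ Fb (2*m+3) ∧
        b ^ Fb (2*m+1) < C⁻¹ * a ^ Fb (2*m)) ∨
      (C ^ Fb (2*m+3) < a ∧ a < C ^ Fb (2*m+4) ∧ C⁻¹ * a ^ Fb (2*m+2) < b ^ Fb (2*m+3) ∧
        b ^ Fb (2*m+2) < C * a ^ Fb (2*m+1))) := by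
  have hC0 : 0 < C := lt_trans one_pos hC
  set A := Real.log a with hA
  set B := Real.log b with hB
  set L := Real.log C with hLdef
  have hL : 0 < L := Real.log_pos hC
  set e₁ := (Fb (2*m) : ℝ) with he1
  set e₂ := (Fb (2*m+1) : ℝ) with he2
  set e₃ := (Fb (2*m+2) : ℝ) with he3
  set e₄ := (Fb (2*m+3) : ℝ) with he4
  set e₅ := (Fb (2*m+4) : ℝ) with he5
  have key := keylem' A B L e₁ e₂ e₃ e₄ e₅ hL
    (by rw [he1]; exact_mod_cast fb_pos' (2*m)) (by rw [he2]; exact_mod_cast fb_pos' (2*m+1))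
    (by rw [he1, he2, he3]; exact_mod_cast fb_rec' (2*m))
    (by rw [he2, he3, he4]; exact_mod_cast fb_rec' (2*m+1))
    (by rw [he3, he4, he5]; exact_mod_cast fb_rec' (2*m+2))
    (by rw [he1, he2, he3]; exact_mod_cast fbcas' m)
  have t1 : ∀ k l : ℕ, (C * b ^ k < a ^ l) ↔ (L + (k:ℝ)*B < (l:ℝ)*A) := by
    intro k l
    rw [← Real.log_lt_log_iff (by positivity) (by positivity),
      Real.log_mul hC0.ne' (by positivity), Real.log_pow, Real.log_pow]
  have t2 : ∀ k l : ℕ, (b ^ k < C * a ^ l) ↔ ((k:ℝ)*B < L + (l:ℝ)*A) := by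
    intro k l
    rw [← Real.log_lt_log_iff (by positivity) (by positivity),
      Real.log_mul hC0.ne' (by positivity), Real.log_pow, Real.log_pow]
  have t2a : ∀ k l : ℕ, (a ^ k < C * b ^ l) ↔ ((k:ℝ)*A < L + (l:ℝ)*B) := by
    intro k l
    rw [← Real.log_lt_log_iff (by positivity) (by positivity),
      Real.log_mul hC0.ne' (by positivity), Real.log_pow, Real.log_pow]
  have t3 : ∀ k l : ℕ, (b ^ k < a ^ l) ↔ ((k:ℝ)*B < (l:ℝ)*A) := by
    intro k l
    rw [← Real.log_lt_log_iff (by positivity) (by positivity), Real.log_pow, Real.log_pow]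
  have t4 : ∀ k : ℕ, (C ^ k < a) ↔ ((k:ℝ)*L < A) := by
    intro k
    rw [← Real.log_lt_log_iff (by positivity) ha, Real.log_pow]
  have t5 : ∀ k : ℕ, (a ≤ C ^ k) ↔ (A ≤ (k:ℝ)*L) := by
    intro k
    rw [← Real.log_le_log_iff ha (by positivity), Real.log_pow]
  have t6 : ∀ k : ℕ, (a < C ^ k) ↔ (A < (k:ℝ)*L) := by
    intro k
    rw [← Real.log_lt_log_iff ha (by positivity), Real.log_pow]
  have t7 : ∀ k l : ℕ, (C⁻¹ * a ^ k < b ^ l) ↔ ((k:ℝ)*A < L + (l:ℝ)*B) := by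
    intro k l
    rw [inv_mul_lt_iff₀ hC0, ← Real.log_lt_log_iff (by positivity) (by positivity),
      Real.log_mul hC0.ne' (by positivity), Real.log_pow, Real.log_pow]
  have t8 : ∀ k l : ℕ, (b ^ k < C⁻¹ * a ^ l) ↔ (L + (k:ℝ)*B < (l:ℝ)*A) := by
    intro k l
    rw [inv_mul_eq_div, lt_div_iff₀ hC0, mul_comm,
      ← Real.log_lt_log_iff (by positivity) (by positivity),
      Real.log_mul hC0.ne' (by positivity), Real.log_pow, Real.log_pow]
  rw [t1, t2, t3, t2a, t4, t5, t7, t8, t4, t6]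
  exact key

private lemma bridge' (C a b : ℝ) (hC : 1 < C) (ha0 : 0 ≤ a) (hb : 0 < b) (m : ℕ) :
    (C * b ^ Fb (2*m+1) < a ^ Fb (2*m) ∧ b ^ Fb (2*m+2) < C * a ^ Fb (2*m+1) ∧
      b ^ Fb (2*m+3) < a ^ Fb (2*m+2) ∧ a ^ Fb (2*m+2) < C * b ^ Fb (2*m+3)) ↔
    ((C ^ Fb (2*m+2) < a ∧ a ≤ C ^ Fb (2*m+3) ∧ C⁻¹ * a ^ Fb (2*m+2) < b ^ Fb (2*m+3) ∧
        b ^ Fb (2*m+1) < C⁻¹ * a ^ Fb (2*m)) ∨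
      (C ^ Fb (2*m+3) < a ∧ a < C ^ Fb (2*m+4) ∧ C⁻¹ * a ^ Fb (2*m+2) < b ^ Fb (2*m+3) ∧
        b ^ Fb (2*m+2) < C * a ^ Fb (2*m+1))) := by
  have hC0 : 0 < C := lt_trans one_pos hC
  constructor
  · intro h
    have ha : 0 < a := by
      rcases ha0.lt_or_eq with h' | h'
      · exact h'
      · exfalso
        have h1 := h.1
        rw [← h', zero_pow (by have := fb_pos' (2*m); omega)] at h1
        have : 0 < C * b ^ Fb (2*m+1) := by positivity
        linarith
    exact (bridge_core' C a b hC ha hb m).1 h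
  · intro h
    have ha : 0 < a := by
      rcases h with ⟨h1, _⟩ | ⟨h1, _⟩ <;> exact lt_trans (by positivity) h1
    exact (bridge_core' C a b hC ha hb m).2 h

end Aux

/-- If `|c| > 1` then `J₁` has the stated closed form and `J_{2n+1} = B_{2n} ∪ B_{2n+1}`
for all `n ≥ 1`. -/

theorem stmt9 [Fact p.Prime] (hodd : Odd p) (c : ℚ_[p]) (hc : 1 < ‖c‖) :
    J1 c = {z ∈ QSet c | ‖c‖ < ‖z.1‖ ∧ ‖z.1‖ < ‖c‖ ^ 2 ∧
        ‖c‖⁻¹ * ‖z.1‖ < ‖z.2‖ ∧ ‖z.2‖ < ‖c‖} ∧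
      ∀ n : ℕ, 1 ≤ n → Jodd c n = B2n c n ∪ B2n1 c n := by
  have hC0 : 0 < ‖c‖ := lt_trans one_pos hc
  constructor
  · ext z
    simp only [J1, Set.mem_sep_iff, Set.mem_setOf_eq]
    constructor
    · rintro ⟨hQ, h1, h2, h3, h4⟩
      exact ⟨hQ, h1, by nlinarith, (inv_mul_lt_iff₀ hC0).2 h4, h2⟩
    · rintro ⟨hQ, h1, h2, h3, h4⟩
      exact ⟨hQ, h1, h4, lt_trans h4 h1, (inv_mul_lt_iff₀ hC0).1 h3⟩
  · intro n hn
    obtain ⟨m, rfl⟩ : ∃ m, n = m+1 := ⟨n-1, by omega⟩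
    ext z
    simp only [Jodd, B2n, B2n1, Set.mem_union, Set.mem_sep_iff, Set.mem_setOf_eq]
    have hidx1 : 2*(m+1)-2 = 2*m := by omega
    have hidx2 : 2*(m+1)-1 = 2*m+1 := by omega
    have hidx3 : 2*(m+1) = 2*m+2 := by omega
    have hidx4 : 2*(m+1)+1 = 2*m+3 := by omega
    have hidx5 : 2*(m+1)+2 = 2*m+4 := by omega
    rw [hidx1, hidx2, hidx5, hidx4, hidx3]
    constructor
    · rintro ⟨hQ, h⟩
      have hb : 0 < ‖z.2‖ := by
        have h0 := hQ 0
        rw [Function.iterate_zero_apply] at h0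
        exact norm_pos_iff.2 h0
      rcases (bridge' ‖c‖ ‖z.1‖ ‖z.2‖ hc (norm_nonneg _) hb m).1 h with h' | h'
      · exact Or.inl ⟨hQ, h'⟩
      · exact Or.inr ⟨hQ, h'⟩
    · rintro (⟨hQ, h⟩ | ⟨hQ, h⟩) <;>
      · have hb : 0 < ‖z.2‖ := by
          have h0 := hQ 0
          rw [Function.iterate_zero_apply] at h0
          exact norm_pos_iff.2 h0
        refine ⟨hQ, (bridge' ‖c‖ ‖z.1‖ ‖z.2‖ hc (norm_nonneg _) hb m).2 ?_⟩
        first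
          | exact Or.inl h
          | exact Or.inr h
end

section
/- Assume |c| > 1. Then J₂ = A₁ ∪ A₂, where A₁ = {(x,y) ∈ Q : |c| < |x| ≤ |c|², |c| < |y|, and |y|² < |c||x|} and A₂ = {(x,y) ∈ Q : |c|² < |x| < |c|³, |c|^{-1}|x| < |y|, and |y|² < |c||x|}; and for every n ≥ 1, J_{2n+2} = A_{2n+1} ∪ A_{2n+2}, where A_{2n+1} = {(x,y) ∈ Q : |c|^{F_{2n+1}} < |x| ≤ |c|^{F_{2n+2}}, |c||x|^{F_{2n-1}} < |y|^{F_{2n}}, and |y|^{F_{2n+2}} < |c||x|^{F_{2n+1}}} and A_{2n+2} = {(x,y) ∈ Q : |c|^{F_{2n+2}} < |x| < |c|^{F_{2n+3}}, |c|^{-1}|x|^{F_{2n}} < |y|^{F_{2n+1}}, and |y|^{F_{2n+2}} < |c||x|^{F_{2n+1}}}. -/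
variable {p : ℕ}

/-- `J₂ = {(x,y) ∈ Q : |y| > |c|, |x| < |c||y|, |x| < |y|² < |c||x|}`. -/
def J2 [Fact p.Prime] (c : ℚ_[p]) : Set (ℚ_[p] × ℚ_[p]) :=
  {z ∈ QSet c | ‖c‖ < ‖z.2‖ ∧ ‖z.1‖ < ‖c‖ * ‖z.2‖ ∧
    ‖z.1‖ < ‖z.2‖ ^ 2 ∧ ‖z.2‖ ^ 2 < ‖c‖ * ‖z.1‖}

/-- `J_{2n+2}`, for `n ≥ 1`. -/
def Jeven [Fact p.Prime] (c : ℚ_[p]) (n : ℕ) : Set (ℚ_[p] × ℚ_[p]) :=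
  {z ∈ QSet c | ‖c‖ * ‖z.1‖ ^ Fb (2*n-1) < ‖z.2‖ ^ Fb (2*n) ∧
    ‖z.1‖ ^ Fb (2*n) < ‖c‖ * ‖z.2‖ ^ Fb (2*n+1) ∧
    ‖z.1‖ ^ Fb (2*n+1) < ‖z.2‖ ^ Fb (2*n+2) ∧
    ‖z.2‖ ^ Fb (2*n+2) < ‖c‖ * ‖z.1‖ ^ Fb (2*n+1)}

/-- `A₁`. -/
def A1 [Fact p.Prime] (c : ℚ_[p]) : Set (ℚ_[p] × ℚ_[p]) :=
  {z ∈ QSet c | ‖c‖ < ‖z.1‖ ∧ ‖z.1‖ ≤ ‖c‖ ^ 2 ∧ ‖c‖ < ‖z.2‖ ∧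
    ‖z.2‖ ^ 2 < ‖c‖ * ‖z.1‖}

/-- `A₂`. -/
def A2 [Fact p.Prime] (c : ℚ_[p]) : Set (ℚ_[p] × ℚ_[p]) :=
  {z ∈ QSet c | ‖c‖ ^ 2 < ‖z.1‖ ∧ ‖z.1‖ < ‖c‖ ^ 3 ∧ ‖c‖⁻¹ * ‖z.1‖ < ‖z.2‖ ∧
    ‖z.2‖ ^ 2 < ‖c‖ * ‖z.1‖}

/-- `A_{2n+1}`, for `n ≥ 1`. -/
def A2n1 [Fact p.Prime] (c : ℚ_[p]) (n : ℕ) : Set (ℚ_[p] × ℚ_[p]) :=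
  {z ∈ QSet c | ‖c‖ ^ Fb (2*n+1) < ‖z.1‖ ∧ ‖z.1‖ ≤ ‖c‖ ^ Fb (2*n+2) ∧
    ‖c‖ * ‖z.1‖ ^ Fb (2*n-1) < ‖z.2‖ ^ Fb (2*n) ∧
    ‖z.2‖ ^ Fb (2*n+2) < ‖c‖ * ‖z.1‖ ^ Fb (2*n+1)}

/-- `A_{2n+2}`, for `n ≥ 1`. -/
def A2n2 [Fact p.Prime] (c : ℚ_[p]) (n : ℕ) : Set (ℚ_[p] × ℚ_[p]) :=
  {z ∈ QSet c | ‖c‖ ^ Fb (2*n+2) < ‖z.1‖ ∧ ‖z.1‖ < ‖c‖ ^ Fb (2*n+3) ∧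
    ‖c‖⁻¹ * ‖z.1‖ ^ Fb (2*n) < ‖z.2‖ ^ Fb (2*n+1) ∧
    ‖z.2‖ ^ Fb (2*n+2) < ‖c‖ * ‖z.1‖ ^ Fb (2*n+1)}


private lemma key {γ a b : ℝ} (hγ : 1 < γ) (ha : 0 ≤ a) (hb : 0 < b)
    {k l m s t : ℕ} (hm : 0 < m)
    (h1 : m*l = k*s + 1) (h2 : l*l = k*m + 1) (h3 : l*s = m*m + 1)
    (hs : s = l + m) (ht : t = m + s) :
    (γ*a^k < b^l ∧ a^l < γ*b^m ∧ a^m < b^s ∧ b^s < γ*a^m) ↔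
    ((γ^m < a ∧ a ≤ γ^s ∧ γ*a^k < b^l ∧ b^s < γ*a^m) ∨
     (γ^s < a ∧ a < γ^t ∧ γ⁻¹*a^l < b^m ∧ b^s < γ*a^m)) := by
  have hγ0 : (0:ℝ) < γ := lt_trans one_pos hγ
  have hl : 0 < l := by
    rcases Nat.eq_zero_or_pos l with h | h
    · simp [h] at h2
    · exact h
  have hsp : 0 < s := by omega
  have hinv : ∀ x y : ℝ, (γ⁻¹ * x < y ↔ x < γ * y) := fun x y => inv_mul_lt_iff₀ hγ0
  constructor
  · rintro ⟨H1, H2, H3, H4⟩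
    have ha0 : 0 < a := by
      by_contra h
      push_neg at h
      have haz : a = 0 := le_antisymm h ha
      rw [haz, zero_pow hm.ne'] at H4
      nlinarith [pow_pos hb s]
    have hL : γ^m < a := by
      have e1 : (γ*a^k)^s < (b^s)^l := by
        calc (γ*a^k)^s < (b^l)^s := pow_lt_pow_left₀ H1 (by positivity) hsp.ne'
          _ = (b^s)^l := by rw [← pow_mul, mul_comm, pow_mul]
      have e2 : (b^s)^l < (γ*a^m)^l := pow_lt_pow_left₀ H4 (by positivity) hl.ne'
      have e3 : γ^l * (γ^m * a^(k*s)) < γ^l * (a^(k*s) * a) := by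
        calc γ^l * (γ^m * a^(k*s)) = γ^s * a^(k*s) := by rw [hs, pow_add]; ring
          _ = (γ*a^k)^s := by rw [mul_pow, ← pow_mul]
          _ < (γ*a^m)^l := e1.trans e2
          _ = γ^l * (a^(k*s) * a) := by rw [mul_pow, ← pow_mul, h1, pow_succ]
      have e4 : γ^m * a^(k*s) < a^(k*s) * a :=
        lt_of_mul_lt_mul_left e3 (pow_pos hγ0 l).le
      have e5 : γ^m * a^(k*s) < a * a^(k*s) := by rwa [mul_comm (a^(k*s)) a] at e4
      exact lt_of_mul_lt_mul_right e5 (pow_pos ha0 _).le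
    by_cases hle : a ≤ γ^s
    · exact Or.inl ⟨hL, hle, H1, H4⟩
    · have hgs : γ^s < a := lt_of_not_ge hle
      refine Or.inr ⟨hgs, ?_, (hinv _ _).mpr H2, H4⟩
      have e1 : a^(m*m) * a < γ^s * (γ^m * a^(m*m)) := by
        calc a^(m*m) * a = (a^l)^s := by rw [← pow_mul, h3, pow_succ]
          _ < (γ*b^m)^s := pow_lt_pow_left₀ H2 (by positivity) hsp.ne'
          _ = γ^s * (b^s)^m := by rw [mul_pow, ← pow_mul, mul_comm m s, pow_mul]
          _ < γ^s * (γ*a^m)^m := by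
              refine mul_lt_mul_of_pos_left ?_ (pow_pos hγ0 s)
              exact pow_lt_pow_left₀ H4 (by positivity) hm.ne'
          _ = γ^s * (γ^m * a^(m*m)) := by rw [mul_pow, ← pow_mul]
      have e3 : a * a^(m*m) < γ^t * a^(m*m) := by
        rw [ht, pow_add]; nlinarith [e1]
      exact lt_of_mul_lt_mul_right e3 (pow_pos ha0 _).le
  · rintro (⟨hga, has, H1, H4⟩ | ⟨hsa, hat, H2', H4⟩)
    · have ha0 : 0 < a := lt_trans (pow_pos hγ0 m) hga
      have e1 : (a^l)^l < (γ*b^m)^l := by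
        calc (a^l)^l = a^(k*m) * a := by rw [← pow_mul, h2, pow_succ]
          _ ≤ a^(k*m) * γ^s := by
              exact mul_le_mul_of_nonneg_left has (pow_nonneg ha _)
          _ = γ^l * (γ^m * a^(k*m)) := by rw [hs, pow_add]; ring
          _ = γ^l * (γ*a^k)^m := by rw [mul_pow, ← pow_mul]
          _ < γ^l * (b^l)^m := by
              refine mul_lt_mul_of_pos_left ?_ (pow_pos hγ0 l)
              exact pow_lt_pow_left₀ H1 (by positivity) hm.ne'
          _ = (γ*b^m)^l := by rw [mul_pow, pow_right_comm]
      have H2 : a^l < γ*b^m := lt_of_pow_lt_pow_left₀ l (by positivity) e1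
      have e2 : (a^m)^l < (b^s)^l := by
        calc (a^m)^l = a^(k*s) * a := by rw [← pow_mul, h1, pow_succ]
          _ ≤ a^(k*s) * γ^s := mul_le_mul_of_nonneg_left has (pow_nonneg ha _)
          _ = (γ * a^k)^s := by rw [mul_pow, ← pow_mul]; ring
          _ < (b^l)^s := pow_lt_pow_left₀ H1 (by positivity) hsp.ne'
          _ = (b^s)^l := by rw [← pow_mul, mul_comm, pow_mul]
      have H3 : a^m < b^s := lt_of_pow_lt_pow_left₀ l (pow_nonneg hb.le s) e2
      exact ⟨H1, H2, H3, H4⟩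
    · have ha0 : 0 < a := lt_trans (pow_pos hγ0 s) hsa
      have H2 : a^l < γ * b^m := (hinv _ _).mp H2'
      have e1 : γ^l * (γ*a^k)^m < γ^l * (b^l)^m := by
        calc γ^l * (γ*a^k)^m = γ^l * (γ^m * a^(k*m)) := by rw [mul_pow, ← pow_mul]
          _ = γ^s * a^(k*m) := by rw [hs, pow_add]; ring
          _ < a * a^(k*m) := mul_lt_mul_of_pos_right hsa (pow_pos ha0 _)
          _ = (a^l)^l := by rw [← pow_succ', ← h2, pow_mul]
          _ < (γ*b^m)^l := pow_lt_pow_left₀ H2 (pow_nonneg ha l) hl.ne'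
          _ = γ^l * (b^l)^m := by rw [mul_pow, pow_right_comm]
      have H1 : γ*a^k < b^l :=
        lt_of_pow_lt_pow_left₀ m (pow_nonneg hb.le l)
          (lt_of_mul_lt_mul_left e1 (pow_pos hγ0 l).le)
      have e2 : γ^s * (a^m)^m < γ^s * (b^s)^m := by
        calc γ^s * (a^m)^m = γ^s * a^(m*m) := by rw [← pow_mul]
          _ < a * a^(m*m) := mul_lt_mul_of_pos_right hsa (pow_pos ha0 _)
          _ = (a^l)^s := by rw [← pow_succ', ← h3, pow_mul]
          _ < (γ*b^m)^s := pow_lt_pow_left₀ H2 (pow_nonneg ha l) hsp.ne'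
          _ = γ^s * (b^s)^m := by rw [mul_pow, pow_right_comm]
      have H3 : a^m < b^s :=
        lt_of_pow_lt_pow_left₀ m (pow_nonneg hb.le s)
          (lt_of_mul_lt_mul_left e2 (pow_pos hγ0 s).le)
      exact ⟨H1, H2, H3, H4⟩



private lemma cassini_s10 (j : ℕ) :
    Nat.fib (2*j+1) * Nat.fib (2*j+1) = Nat.fib (2*j) * Nat.fib (2*j+2) + 1 ∧
    Nat.fib (2*j+2) * Nat.fib (2*j+2) + 1 = Nat.fib (2*j+1) * Nat.fib (2*j+3) := by
  induction j with
  | zero => decide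
  | succ j ih =>
    obtain ⟨ih1, ih2⟩ := ih
    have r3 : Nat.fib (2*j+3) = Nat.fib (2*j+1) + Nat.fib (2*j+2) := Nat.fib_add_two
    have r4 : Nat.fib (2*j+4) = Nat.fib (2*j+2) + Nat.fib (2*j+3) := Nat.fib_add_two
    have r5 : Nat.fib (2*j+5) = Nat.fib (2*j+3) + Nat.fib (2*j+4) := Nat.fib_add_two
    have i1 : 2*(j+1)+1 = 2*j+3 := by ring
    have i2 : 2*(j+1)+2 = 2*j+4 := by ring
    have i3 : 2*(j+1)+3 = 2*j+5 := by ring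
    have i0 : 2*(j+1) = 2*j+2 := by ring
    rw [i1, i2, i3, i0]
    rw [r3] at ih2
    constructor
    · rw [r4, r3]
      zify at ih2 ⊢
      linear_combination (-1 : ℤ) * ih2
    · rw [r5, r4, r3]
      zify at ih2 ⊢
      linear_combination ih2

private lemma fbFacts (n : ℕ) (hn : 1 ≤ n) :
    Fb (2*n+1) * Fb (2*n) = Fb (2*n-1) * Fb (2*n+2) + 1 ∧
    Fb (2*n) * Fb (2*n) = Fb (2*n-1) * Fb (2*n+1) + 1 ∧
    Fb (2*n) * Fb (2*n+2) = Fb (2*n+1) * Fb (2*n+1) + 1 ∧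
    Fb (2*n+2) = Fb (2*n) + Fb (2*n+1) ∧
    Fb (2*n+3) = Fb (2*n+1) + Fb (2*n+2) := by
  unfold Fb
  have e : 2*n-1+1 = 2*n := by omega
  rw [e]
  obtain ⟨c1, c2⟩ := cassini_s10 n
  have i1 : 2*n+1+1 = 2*n+2 := by ring
  have i2 : 2*n+2+1 = 2*n+3 := by ring
  have i3 : 2*n+3+1 = 2*n+4 := by ring
  rw [i1, i2, i3]
  have r2 : Nat.fib (2*n+2) = Nat.fib (2*n) + Nat.fib (2*n+1) := Nat.fib_add_two
  have r3 : Nat.fib (2*n+3) = Nat.fib (2*n+1) + Nat.fib (2*n+2) := Nat.fib_add_two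
  have r4 : Nat.fib (2*n+4) = Nat.fib (2*n+2) + Nat.fib (2*n+3) := Nat.fib_add_two
  refine ⟨?_, c1, c2.symm, r3, r4⟩
  rw [r3]
  zify at c1 r2 ⊢
  linear_combination c1 + (Nat.fib (2*n+1) : ℤ) * r2

/-- If `|c| > 1` then `J₂ = A₁ ∪ A₂` and `J_{2n+2} = A_{2n+1} ∪ A_{2n+2}` for all `n ≥ 1`. -/
theorem stmt10 [Fact p.Prime] (hodd : Odd p) (c : ℚ_[p]) (hc : 1 < ‖c‖) :
    J2 c = A1 c ∪ A2 c ∧ ∀ n : ℕ, 1 ≤ n → Jeven c n = A2n1 c n ∪ A2n2 c n := by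
  have hbpos : ∀ z : ℚ_[p] × ℚ_[p], z ∈ QSet c → (0:ℝ) < ‖z.2‖ := by
    intro z hz
    have h0 := hz 0
    rw [Function.iterate_zero_apply] at h0
    exact norm_pos_iff.mpr h0
  constructor
  · ext z
    simp only [J2, A1, A2, Set.mem_union, Set.mem_setOf_eq]
    constructor
    · rintro ⟨hQ, h⟩
      have K := key (γ := ‖c‖) (a := ‖z.1‖) (b := ‖z.2‖) hc (norm_nonneg _) (hbpos z hQ)
        (k := 0) (l := 1) (m := 1) (s := 2) (t := 3) one_pos (by norm_num) (by norm_num)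
        (by norm_num) (by norm_num) (by norm_num)
      simp only [pow_zero, pow_one, mul_one] at K
      rcases K.mp h with h' | h'
      · exact Or.inl ⟨hQ, h'⟩
      · exact Or.inr ⟨hQ, h'⟩
    · rintro (⟨hQ, h⟩ | ⟨hQ, h⟩) <;>
      · have K := key (γ := ‖c‖) (a := ‖z.1‖) (b := ‖z.2‖) hc (norm_nonneg _) (hbpos z hQ)
          (k := 0) (l := 1) (m := 1) (s := 2) (t := 3) one_pos (by norm_num) (by norm_num)
          (by norm_num) (by norm_num) (by norm_num)
        simp only [pow_zero, pow_one, mul_one] at K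
        first
        | exact ⟨hQ, K.mpr (Or.inl h)⟩
        | exact ⟨hQ, K.mpr (Or.inr h)⟩
  · intro n hn
    obtain ⟨h1, h2, h3, hs', ht'⟩ := fbFacts n hn
    have hm : 0 < Fb (2*n+1) := by
      unfold Fb; exact Nat.fib_pos.mpr (by omega)
    ext z
    simp only [Jeven, A2n1, A2n2, Set.mem_union, Set.mem_setOf_eq]
    constructor
    · rintro ⟨hQ, h⟩
      have K := key (γ := ‖c‖) (a := ‖z.1‖) (b := ‖z.2‖) hc (norm_nonneg _) (hbpos z hQ)
        hm h1 h2 h3 hs' ht'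
      rcases K.mp h with h' | h'
      · exact Or.inl ⟨hQ, h'⟩
      · exact Or.inr ⟨hQ, h'⟩
    · rintro (⟨hQ, h⟩ | ⟨hQ, h⟩) <;>
      · have K := key (γ := ‖c‖) (a := ‖z.1‖) (b := ‖z.2‖) hc (norm_nonneg _) (hbpos z hQ)
          hm h1 h2 h3 hs' ht'
        first
        | exact ⟨hQ, K.mpr (Or.inl h)⟩
        | exact ⟨hQ, K.mpr (Or.inr h)⟩
end

section
/- Assume |c| = 1. Then F ∪ G ∪ H ⊆ Q \ K⁻; that is, every point of F ∪ G ∪ H has unbounded backward orbit. -/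
variable {p : ℕ}

-- Auxiliary norm facts

lemma aux_norm_sub_le [Fact p.Prime] {c x : ℚ_[p]} (hc : ‖c‖ = 1) (hx : ‖x‖ ≤ 1) :
    ‖x - c‖ ≤ 1 := by
  calc ‖x - c‖ = ‖x + (-c)‖ := by ring_nf
    _ ≤ max ‖x‖ ‖-c‖ := Padic.nonarchimedean _ _
    _ ≤ 1 := by rw [norm_neg, hc]; exact max_le hx le_rfl

lemma aux_norm_sub_eq [Fact p.Prime] {c x : ℚ_[p]} (hc : ‖c‖ = 1) (hx : 1 < ‖x‖) :
    ‖x - c‖ = ‖x‖ := by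
  have h : ‖x‖ ≠ ‖-c‖ := by rw [norm_neg, hc]; exact ne_of_gt hx
  have : ‖x + (-c)‖ = max ‖x‖ ‖-c‖ := Padic.add_eq_max_of_ne h
  rw [← sub_eq_add_neg] at this
  rw [this, norm_neg, hc, max_eq_left hx.le]

lemma aux_norm_sub_eq_one [Fact p.Prime] {c x : ℚ_[p]} (hc : ‖c‖ = 1) (hx : ‖x‖ < 1) :
    ‖x - c‖ = 1 := by
  have h : ‖x‖ ≠ ‖-c‖ := by rw [norm_neg, hc]; exact ne_of_lt hx
  have : ‖x + (-c)‖ = max ‖x‖ ‖-c‖ := Padic.add_eq_max_of_ne h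
  rw [← sub_eq_add_neg] at this
  rw [this, norm_neg, hc, max_eq_right hx.le]

/-- Two-step growth: from G-type back to G-type with squared second norm. -/
lemma two_step [Fact p.Prime] {c : ℚ_[p]} (hc : ‖c‖ = 1) (z : ℚ_[p] × ℚ_[p])
    (h0 : z.2 ≠ 0) (h1 : ((g c) z).2 ≠ 0)
    (hx : ‖z.1‖ ≤ 1) (hy : 1 < ‖z.2‖) :
    ‖((g c)^[2] z).1‖ ≤ 1 ∧ ‖z.2‖ ^ 2 ≤ ‖((g c)^[2] z).2‖ := by
  have hxc : z.1 - c ≠ 0 := by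
    intro h; apply h1; simp [g, h]
  have hy0 : (0:ℝ) < ‖z.2‖ := lt_trans one_pos hy
  have hxcle : ‖z.1 - c‖ ≤ 1 := aux_norm_sub_le hc hx
  have hxcpos : (0:ℝ) < ‖z.1 - c‖ := norm_pos_iff.mpr hxc
  have hg2 : (g c)^[2] z = ((z.1 - c)/z.2, (z.2 - c) / ((z.1 - c)/z.2)) := by
    show (g c) ((g c) z) = _
    simp [g]
  have hn1 : ‖(z.1 - c)/z.2‖ ≤ 1 := by
    rw [norm_div]
    rw [div_le_one hy0]
    exact hxcle.trans hy.le
  have hn2 : ‖z.2‖ ^ 2 ≤ ‖(z.2 - c) / ((z.1 - c)/z.2)‖ := by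
    rw [norm_div, norm_div, aux_norm_sub_eq hc hy]
    rw [div_div_eq_mul_div]
    rw [le_div_iff₀ hxcpos]
    calc ‖z.2‖ ^ 2 * ‖z.1 - c‖ ≤ ‖z.2‖ ^ 2 * 1 := by
          apply mul_le_mul_of_nonneg_left hxcle (by positivity)
      _ = ‖z.2‖ * ‖z.2‖ := by ring
  rw [hg2]
  exact ⟨hn1, hn2⟩

/-- Iterated growth. -/
lemma iter_growth [Fact p.Prime] {c : ℚ_[p]} (hc : ‖c‖ = 1) (z : ℚ_[p] × ℚ_[p])
    (hQ : z ∈ QSet c) (hx : ‖z.1‖ ≤ 1) (hy : 1 < ‖z.2‖) :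
    ∀ n : ℕ, ‖((g c)^[2*n] z).1‖ ≤ 1 ∧ ‖z.2‖ ^ (2^n) ≤ ‖((g c)^[2*n] z).2‖ := by
  intro n
  induction n with
  | zero => exact ⟨by simpa using hx, by simpa using le_refl ‖z.2‖⟩
  | succ n ih =>
    obtain ⟨ih1, ih2⟩ := ih
    set w := (g c)^[2*n] z with hw
    have hw2 : 1 < ‖w.2‖ := lt_of_lt_of_le (one_lt_pow₀ hy (by positivity)) ih2
    have h0 : w.2 ≠ 0 := hQ (2*n)
    have h1 : ((g c) w).2 ≠ 0 := by
      have := hQ (2*n+1)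
      rwa [Function.iterate_succ_apply'] at this
    obtain ⟨hs1, hs2⟩ := two_step hc w h0 h1 ih1 hw2
    have hiter : (g c)^[2*(n+1)] z = (g c)^[2] w := by
      have h22 : 2*(n+1) = 2 + 2*n := by ring
      rw [hw, ← Function.iterate_add_apply, h22]
    constructor
    · rw [hiter]; exact hs1
    · rw [hiter]
      refine le_trans ?_ hs2
      have : ‖z.2‖ ^ (2^(n+1)) = (‖z.2‖ ^ (2^n)) ^ 2 := by
        rw [pow_succ, pow_mul]
      rw [this]
      exact pow_le_pow_left₀ (by positivity) ih2 2

/-- Unboundedness from a G-type point. -/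
lemma unbounded_of_G [Fact p.Prime] {c : ℚ_[p]} (hc : ‖c‖ = 1) (z : ℚ_[p] × ℚ_[p])
    (hQ : z ∈ QSet c) (hx : ‖z.1‖ ≤ 1) (hy : 1 < ‖z.2‖) :
    ¬ ∃ M : ℝ, ∀ n : ℕ, pnorm ((g c)^[n] z) ≤ M := by
  rintro ⟨M, hM⟩
  obtain ⟨k, hk⟩ := pow_unbounded_of_one_lt M hy
  have hgrow := (iter_growth hc z hQ hx hy k).2
  have h2k : ‖z.2‖ ^ k ≤ ‖z.2‖ ^ (2^k) :=
    pow_le_pow_right₀ hy.le (Nat.lt_two_pow_self (n := k)).le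
  have := hM (2*k)
  have hp : ‖((g c)^[2*k] z).2‖ ≤ pnorm ((g c)^[2*k] z) := le_max_right _ _
  linarith

lemma QSet_g [Fact p.Prime] {c : ℚ_[p]} {z : ℚ_[p] × ℚ_[p]} (hQ : z ∈ QSet c) :
    (g c z) ∈ QSet c := by
  intro n
  have := hQ (n+1)
  rwa [Function.iterate_succ_apply] at this

/-- If `|c| = 1` then `F ∪ G ∪ H ⊆ Q \ K⁻`. -/
theorem stmt14 [Fact p.Prime] (hodd : Odd p) (c : ℚ_[p]) (hc : ‖c‖ = 1)
    (F G H : Set (ℚ_[p] × ℚ_[p]))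
    (hF : F = {z ∈ QSet c | ‖z.1‖ < 1 ∧ ‖z.2‖ < 1})
    (hG : G = {z ∈ QSet c | ‖z.1‖ ≤ 1 ∧ 1 < ‖z.2‖})
    (hH : H = {z ∈ QSet c | 1 < ‖z.1‖ ∧ ‖z.2‖ ≤ 1}) :
    F ∪ G ∪ H ⊆ QSet c \ KMinus c := by
  subst hF hG hH
  intro z hz
  -- reduce to: there is no bound on the backward orbit
  have key : z ∈ QSet c → (¬ ∃ M : ℝ, ∀ n : ℕ, pnorm ((g c)^[n] z) ≤ M) →
      z ∈ QSet c \ KMinus c := by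
    intro hQ hnb
    exact ⟨hQ, fun h => hnb h.2⟩
  -- helper: unboundedness of the orbit of g z gives unboundedness for z
  have shift : (¬ ∃ M : ℝ, ∀ n : ℕ, pnorm ((g c)^[n] (g c z)) ≤ M) →
      (¬ ∃ M : ℝ, ∀ n : ℕ, pnorm ((g c)^[n] z) ≤ M) := by
    rintro hnb ⟨M, hM⟩
    apply hnb
    refine ⟨M, fun n => ?_⟩
    rw [← Function.iterate_succ_apply]
    exact hM (n+1)
  rcases hz with (hz | hz) | hz
  · -- F : |x| < 1, |y| < 1
    obtain ⟨hQ, hx, hy⟩ := hz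
    apply key hQ
    apply shift
    have h0 : z.2 ≠ 0 := hQ 0
    have hy0 : (0:ℝ) < ‖z.2‖ := norm_pos_iff.mpr h0
    have hgx : ‖(g c z).1‖ ≤ 1 := by simpa [g] using hy.le
    have hgy : 1 < ‖(g c z).2‖ := by
      show 1 < ‖(z.1 - c)/z.2‖
      rw [norm_div, aux_norm_sub_eq_one hc hx]
      rw [lt_div_iff₀ hy0, one_mul]
      exact hy
    exact unbounded_of_G hc _ (QSet_g hQ) hgx hgy
  · -- G : |x| ≤ 1, 1 < |y|
    obtain ⟨hQ, hx, hy⟩ := hz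
    exact key hQ (unbounded_of_G hc z hQ hx hy)
  · -- H : 1 < |x|, |y| ≤ 1
    obtain ⟨hQ, hx, hy⟩ := hz
    apply key hQ
    apply shift
    have h0 : z.2 ≠ 0 := hQ 0
    have hy0 : (0:ℝ) < ‖z.2‖ := norm_pos_iff.mpr h0
    have hgx : ‖(g c z).1‖ ≤ 1 := by simpa [g] using hy
    have hgy : 1 < ‖(g c z).2‖ := by
      show 1 < ‖(z.1 - c)/z.2‖
      rw [norm_div, aux_norm_sub_eq hc hx]
      rw [lt_div_iff₀ hy0, one_mul]
      exact lt_of_le_of_lt hy hx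
    exact unbounded_of_G hc _ (QSet_g hQ) hgx hgy
end
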